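/- arXiv:2603.13197 — 7 statements merged into one kernel-verified Lean document; each statement's English description precedes it below -/
import Mathlib

section
/- Let X, A, R be nonempty finite sets, let q be a probability mass function on R, and let f : X × R → (A → [0,1]) be a family of conditional distributions, i.e. for every x ∈ X and r ∈ R we have ∑_{a ∈ A} f(x,r)(a) = 1. Define the network distribution p(a|x) = ∑_{r ∈ R} q(r)·f(x,r)(a). Then for every ε > 0 and every natural number n with n > ln(2|X||A|)/(2ε²), there exists a tuple of samples r⁽¹⁾, …, r⁽ⁿ⁾ ∈ R such that for all x ∈ X and a ∈ A, |p(a|x) − (1/n)·∑_{i=1}^{n} f(x, r⁽ⁱ⁾)(a)| < ε. In particular, the empirical source Q, uniform over the n samples, has cardinality at most n and reproduces p(a|x) up to ε in the infinity norm. -/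
open Real Finset

/-- Pointwise Hoeffding bound: for `p ∈ [0,1]`, `t ≥ 0`,
`1 - p + p * exp t ≤ exp (t*p + t^2/8)`. -/
lemma hoeff_pointwise {p t : ℝ} (hp0 : 0 ≤ p) (hp1 : p ≤ 1) (ht : 0 ≤ t) :
    1 - p + p * Real.exp t ≤ Real.exp (t * p + t ^ 2 / 8) := by
  rcases eq_or_lt_of_le hp0 with h0 | hp0'
  · simp only [← h0, sub_zero, zero_mul, add_zero, mul_zero, zero_add]
    have : (0:ℝ) ≤ t ^ 2 / 8 := by positivity
    simpa using Real.one_le_exp this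
  -- now 0 < p, so D u := 1 - p + p * exp u > 0 for all u
  set D : ℝ → ℝ := fun u => 1 - p + p * Real.exp u with hD
  have hDpos : ∀ u, 0 < D u := fun u => by
    have : 0 < p * Real.exp u := by positivity
    simp only [hD]; linarith [sub_nonneg.mpr hp1]
  -- φ u = u*p + u^2/8 - log (D u)
  set φ : ℝ → ℝ := fun u => u * p + u ^ 2 / 8 - Real.log (D u) with hφ
  -- ψ u = p + u/4 - p * exp u / D u  (the derivative of φ)
  set ψ : ℝ → ℝ := fun u => p + u / 4 - p * Real.exp u / D u with hψ
  have hDderiv : ∀ u, HasDerivAt D (p * Real.exp u) u := fun u => by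
    exact ((Real.hasDerivAt_exp u).const_mul p).const_add (1 - p)
  have hφderiv : ∀ u, HasDerivAt φ (ψ u) u := by
    intro u
    have h1 : HasDerivAt (fun u : ℝ => u * p) p u := by
      simpa using (hasDerivAt_id u).mul_const p
    have h2 : HasDerivAt (fun u : ℝ => u ^ 2 / 8) (u / 4) u := by
      have := (hasDerivAt_pow 2 u).div_const 8
      exact this.congr_deriv (by norm_num; ring)
    have h3 : HasDerivAt (fun u => Real.log (D u)) (p * Real.exp u / D u) u :=
      (hDderiv u).log (hDpos u).ne'
    exact (h1.add h2).sub h3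
  have hψderiv : ∀ u, HasDerivAt ψ (1 / 4 - p * Real.exp u * (1 - p) / (D u) ^ 2) u := by
    intro u
    have h2 : HasDerivAt (fun u : ℝ => p + u / 4) (1 / 4) u := by
      simpa using ((hasDerivAt_id u).div_const 4).const_add p
    have h3 : HasDerivAt (fun u => p * Real.exp u / D u)
        ((p * Real.exp u * D u - p * Real.exp u * (p * Real.exp u)) / (D u) ^ 2) u :=
      ((Real.hasDerivAt_exp u).const_mul p).div (hDderiv u) (hDpos u).ne'
    have : HasDerivAt ψ (1 / 4 -
        (p * Real.exp u * D u - p * Real.exp u * (p * Real.exp u)) / (D u) ^ 2) u :=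
      h2.sub h3
    have hsub : p * Real.exp u * D u - p * Real.exp u * (p * Real.exp u)
        = p * Real.exp u * (1 - p) := by simp only [hD]; ring
    rw [hsub] at this
    exact this
  -- deriv of ψ is nonneg: AM-GM
  have hψ'nonneg : ∀ u, 0 ≤ 1 / 4 - p * Real.exp u * (1 - p) / (D u) ^ 2 := by
    intro u
    have hDu := hDpos u
    have hDval : D u = (1 - p) + p * Real.exp u := by simp [hD]
    rw [sub_nonneg, div_le_iff₀ (by positivity), hDval]
    nlinarith [sq_nonneg ((1 - p) - p * Real.exp u)]
  have hψdiff : Differentiable ℝ ψ := fun u => (hψderiv u).differentiableAt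
  have hψmono : Monotone ψ := monotone_of_deriv_nonneg hψdiff (fun u => by
    rw [(hψderiv u).deriv]; exact hψ'nonneg u)
  have hψ0 : ψ 0 = 0 := by
    have : D 0 = 1 := by simp [hD]
    simp [hψ, this]
  have hψnonneg : ∀ u, 0 ≤ u → 0 ≤ ψ u := fun u hu => hψ0 ▸ hψmono hu
  -- φ is monotone on [0, ∞)
  have hφdiff : Differentiable ℝ φ := fun u => (hφderiv u).differentiableAt
  have hφmono : MonotoneOn φ (Set.Ici 0) := by
    apply monotoneOn_of_deriv_nonneg (convex_Ici 0) hφdiff.continuous.continuousOn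
      hφdiff.differentiableOn
    intro u hu
    rw [interior_Ici] at hu
    rw [(hφderiv u).deriv]
    exact hψnonneg u hu.le
  have hφ0 : φ 0 = 0 := by
    have : D 0 = 1 := by simp [hD]
    simp [hφ, this]
  have hφt : 0 ≤ φ t := hφ0 ▸ hφmono (Set.self_mem_Ici) (Set.mem_Ici.mpr ht) ht
  have hlog : Real.log (D t) ≤ t * p + t ^ 2 / 8 := by
    simp only [hφ] at hφt; linarith
  have := (Real.log_le_iff_le_exp (hDpos t)).mp hlog
  simpa [hD] using this

/-- Hoeffding's lemma for a finite pmf: the mgf of a `[0,1]`-valued variable,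
centered, is at most `exp (t²/8)`. -/
lemma hoeff_mgf {R : Type*} [Fintype R] (q : R → ℝ) (hq0 : ∀ r, 0 ≤ q r)
    (hq1 : ∑ r, q r = 1) (g : R → ℝ) (hg0 : ∀ r, 0 ≤ g r) (hg1 : ∀ r, g r ≤ 1)
    {t : ℝ} (ht : 0 ≤ t) :
    ∑ r, q r * Real.exp (t * (g r - ∑ r', q r' * g r')) ≤ Real.exp (t ^ 2 / 8) := by
  set μ : ℝ := ∑ r', q r' * g r' with hμ
  have hμ0 : 0 ≤ μ := Finset.sum_nonneg fun r _ => mul_nonneg (hq0 r) (hg0 r)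
  have hμ1 : μ ≤ 1 := by
    rw [hμ, ← hq1]
    exact Finset.sum_le_sum fun r _ =>
      mul_le_of_le_one_right (hq0 r) (hg1 r)
  -- convexity: exp (t * g r) ≤ 1 - g r + g r * exp t
  have hconv : ∀ r, Real.exp (t * g r) ≤ 1 - g r + g r * Real.exp t := by
    intro r
    have := convexOn_exp.2 (Set.mem_univ (0:ℝ)) (Set.mem_univ t)
      (by linarith [hg1 r] : (0:ℝ) ≤ 1 - g r) (hg0 r) (by ring)
    simpa [mul_comm] using this
  calc ∑ r, q r * Real.exp (t * (g r - μ))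
      = Real.exp (-(t * μ)) * ∑ r, q r * Real.exp (t * g r) := by
        rw [Finset.mul_sum]
        refine Finset.sum_congr rfl fun r _ => ?_
        rw [show t * (g r - μ) = -(t * μ) + t * g r by ring, Real.exp_add]
        ring
    _ ≤ Real.exp (-(t * μ)) * (1 - μ + μ * Real.exp t) := by
        refine mul_le_mul_of_nonneg_left ?_ (Real.exp_pos _).le
        calc ∑ r, q r * Real.exp (t * g r)
            ≤ ∑ r, q r * (1 - g r + g r * Real.exp t) :=
              Finset.sum_le_sum fun r _ =>
                mul_le_mul_of_nonneg_left (hconv r) (hq0 r)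
          _ = 1 - μ + μ * Real.exp t := by
              simp only [mul_add, mul_sub, mul_one, Finset.sum_add_distrib,
                Finset.sum_sub_distrib, hq1, hμ, ← mul_assoc, ← Finset.sum_mul]
    _ ≤ Real.exp (-(t * μ)) * Real.exp (t * μ + t ^ 2 / 8) := by
        refine mul_le_mul_of_nonneg_left ?_ (Real.exp_pos _).le
        exact hoeff_pointwise hμ0 hμ1 ht
    _ = Real.exp (t ^ 2 / 8) := by rw [← Real.exp_add]; ring_nf

/-- Chernoff tail bound for the empirical sum of an i.i.d. `[0,1]`-valued variable. -/
lemma chernoff_tail {R : Type*} [Fintype R] (q : R → ℝ) (hq0 : ∀ r, 0 ≤ q r)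
    (hq1 : ∑ r, q r = 1) (g : R → ℝ) (hg0 : ∀ r, 0 ≤ g r) (hg1 : ∀ r, g r ≤ 1)
    {ε : ℝ} (hε : 0 < ε) (n : ℕ) :
    ∑ s ∈ Finset.univ.filter
        (fun s : Fin n → R => (n : ℝ) * (∑ r', q r' * g r') + n * ε ≤ ∑ i, g (s i)),
      (∏ i, q (s i)) ≤ Real.exp (-(2 * n * ε ^ 2)) := by
  classical
  set μ : ℝ := ∑ r', q r' * g r' with hμ
  set t : ℝ := 4 * ε with htdef
  have ht : 0 ≤ t := by positivity
  set w : (Fin n → R) → ℝ := fun s => ∏ i, q (s i) with hw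
  have hw0 : ∀ s, 0 ≤ w s := fun s => Finset.prod_nonneg fun i _ => hq0 (s i)
  -- each term in the filtered sum is dominated by the exponential-tilted term
  have step1 : ∀ s ∈ Finset.univ.filter
      (fun s : Fin n → R => (n : ℝ) * μ + n * ε ≤ ∑ i, g (s i)),
      w s ≤ w s * Real.exp (t * ((∑ i, (g (s i) - μ)) - n * ε)) := by
    intro s hs
    rw [Finset.mem_filter] at hs
    have harg : 0 ≤ t * ((∑ i, (g (s i) - μ)) - n * ε) := by
      apply mul_nonneg ht
      rw [Finset.sum_sub_distrib, Finset.sum_const, Finset.card_univ, Fintype.card_fin,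
        nsmul_eq_mul]
      linarith [hs.2]
    nlinarith [Real.one_le_exp harg, hw0 s]
  calc ∑ s ∈ Finset.univ.filter
        (fun s : Fin n → R => (n : ℝ) * μ + n * ε ≤ ∑ i, g (s i)), w s
      ≤ ∑ s ∈ Finset.univ.filter
        (fun s : Fin n → R => (n : ℝ) * μ + n * ε ≤ ∑ i, g (s i)),
          w s * Real.exp (t * ((∑ i, (g (s i) - μ)) - n * ε)) :=
        Finset.sum_le_sum step1
    _ ≤ ∑ s : Fin n → R, w s * Real.exp (t * ((∑ i, (g (s i) - μ)) - n * ε)) :=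
        Finset.sum_le_sum_of_subset_of_nonneg (Finset.filter_subset _ _)
          (fun s _ _ => mul_nonneg (hw0 s) (Real.exp_pos _).le)
    _ = Real.exp (-(t * (n * ε))) *
          ∑ s : Fin n → R, ∏ i, (q (s i) * Real.exp (t * (g (s i) - μ))) := by
        rw [Finset.mul_sum]
        refine Finset.sum_congr rfl fun s _ => ?_
        rw [Finset.prod_mul_distrib, show t * ((∑ i, (g (s i) - μ)) - n * ε)
          = -(t * (n * ε)) + ∑ i, t * (g (s i) - μ) by rw [← Finset.mul_sum]; ring,
          Real.exp_add, Real.exp_sum]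
        ring
    _ = Real.exp (-(t * (n * ε))) * (∑ r, q r * Real.exp (t * (g r - μ))) ^ n := by
        congr 1
        have hps := Finset.prod_univ_sum (fun _ : Fin n => (Finset.univ : Finset R))
          (fun _ r => q r * Real.exp (t * (g r - μ)))
        rw [Fintype.piFinset_univ] at hps
        rw [← hps, Finset.prod_const, Finset.card_univ, Fintype.card_fin]
    _ ≤ Real.exp (-(t * (n * ε))) * (Real.exp (t ^ 2 / 8)) ^ n := by
        refine mul_le_mul_of_nonneg_left ?_ (Real.exp_pos _).le
        refine pow_le_pow_left₀ (Finset.sum_nonneg fun r _ =>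
          mul_nonneg (hq0 r) (Real.exp_pos _).le) ?_ n
        exact hoeff_mgf q hq0 hq1 g hg0 hg1 ht
    _ = Real.exp (-(2 * n * ε ^ 2)) := by
        rw [← Real.exp_nat_mul, ← Real.exp_add]
        congr 1
        rw [htdef]
        ring

lemma sum_biUnion_le' {ι α : Type*} [DecidableEq α] (s : Finset ι) (t : ι → Finset α)
    (f : α → ℝ) (hf : ∀ a, 0 ≤ f a) :
    ∑ x ∈ s.biUnion t, f x ≤ ∑ i ∈ s, ∑ x ∈ t i, f x := by
  classical
  induction s using Finset.induction with
  | empty => simp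
  | @insert a s' h ih =>
    rw [Finset.biUnion_insert, Finset.sum_insert h]
    have h1 : ∑ x ∈ t a ∪ s'.biUnion t, f x + ∑ x ∈ t a ∩ s'.biUnion t, f x
        = ∑ x ∈ t a, f x + ∑ x ∈ s'.biUnion t, f x := Finset.sum_union_inter
    have h2 : 0 ≤ ∑ x ∈ t a ∩ s'.biUnion t, f x := Finset.sum_nonneg fun x _ => hf x
    linarith [ih]

/-- compressing a single randomness source in a communication network.
Given a network distribution `p(a|x) = ∑ r, q r * f x r a`, for every `ε > 0` and
every natural number `n > ln(2|X||A|)/(2ε²)` there exist samples `r⁽¹⁾, …, r⁽ⁿ⁾ ∈ R`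
whose empirical average reproduces `p(a|x)` up to `ε` for every `x` and `a`. -/
theorem stmt_0 {X A R : Type*} [Fintype X] [Fintype A] [Fintype R]
    [Nonempty X] [Nonempty A] [Nonempty R]
    (q : R → ℝ) (hq0 : ∀ r, 0 ≤ q r) (hq1 : ∑ r, q r = 1)
    (f : X → R → A → ℝ)
    (hf0 : ∀ x r a, 0 ≤ f x r a) (hf1 : ∀ x r a, f x r a ≤ 1)
    (hfsum : ∀ x r, ∑ a, f x r a = 1)
    (ε : ℝ) (hε : 0 < ε) (n : ℕ)
    (hn : (n : ℝ) > Real.log (2 * Fintype.card X * Fintype.card A) / (2 * ε ^ 2)) :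
    ∃ s : Fin n → R, ∀ (x : X) (a : A),
      |(∑ r, q r * f x r a) - (1 / (n : ℝ)) * ∑ i, f x (s i) a| < ε := by
  classical
  set K := Fintype.card X with hK
  set M := Fintype.card A with hM
  have hK1 : 1 ≤ K := Fintype.card_pos
  have hM1 : 1 ≤ M := Fintype.card_pos
  have h2KM : (1:ℝ) < 2 * K * M := by
    have : (1:ℝ) ≤ (K:ℝ) := by exact_mod_cast hK1
    have : (1:ℝ) ≤ (M:ℝ) := by exact_mod_cast hM1
    nlinarith [show (1:ℝ) ≤ (K:ℝ) from by exact_mod_cast hK1]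
  have hlogpos : 0 < Real.log (2 * K * M) := Real.log_pos h2KM
  have hnpos : 0 < n := by
    by_contra h
    push_neg at h
    interval_cases n
    simp only [Nat.cast_zero] at hn
    have : 0 < Real.log (2 * K * M) / (2 * ε ^ 2) := by positivity
    linarith
  have hnR : (0:ℝ) < n := by exact_mod_cast hnpos
  -- the key numeric bound
  have hexp : 2 * (K:ℝ) * M * Real.exp (-(2 * n * ε ^ 2)) < 1 := by
    have h1 : Real.log (2 * K * M) < (n:ℝ) * (2 * ε ^ 2) := by
      rw [gt_iff_lt, div_lt_iff₀ (by positivity)] at hn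
      exact hn
    have h2 : Real.exp (-(2 * n * ε ^ 2)) < (2 * (K:ℝ) * M)⁻¹ := by
      have h3 : Real.exp (-(2 * n * ε ^ 2)) < Real.exp (-Real.log (2 * K * M)) :=
        Real.exp_lt_exp.mpr (by linarith)
      rwa [show Real.exp (-Real.log (2 * (K:ℝ) * M)) = (2 * (K:ℝ) * M)⁻¹ by
        rw [Real.exp_neg, Real.exp_log (by linarith)]] at h3
    calc 2 * (K:ℝ) * M * Real.exp (-(2 * n * ε ^ 2))
        < 2 * (K:ℝ) * M * (2 * (K:ℝ) * M)⁻¹ :=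
          mul_lt_mul_of_pos_left h2 (by linarith)
      _ = 1 := mul_inv_cancel₀ (by linarith)
  set w : (Fin n → R) → ℝ := fun s => ∏ i, q (s i) with hw
  have hw0 : ∀ s, 0 ≤ w s := fun s => Finset.prod_nonneg fun i _ => hq0 (s i)
  have hwtot : ∑ s : Fin n → R, w s = 1 := by
    have hps := Finset.prod_univ_sum (fun _ : Fin n => (Finset.univ : Finset R))
      (fun _ r => q r)
    rw [Fintype.piFinset_univ] at hps
    rw [hw, ← hps, hq1, Finset.prod_const, one_pow]
  set P : X → A → ℝ := fun x a => ∑ r, q r * f x r a with hP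
  -- tail events
  set E1 : X → A → Finset (Fin n → R) := fun x a => Finset.univ.filter
    (fun s => (n : ℝ) * (∑ r', q r' * f x r' a) + n * ε ≤ ∑ i, f x (s i) a) with hE1
  set E2 : X → A → Finset (Fin n → R) := fun x a => Finset.univ.filter
    (fun s => (n : ℝ) * (∑ r', q r' * (1 - f x r' a)) + n * ε ≤ ∑ i, (1 - f x (s i) a))
    with hE2
  have hE1bound : ∀ x a, ∑ s ∈ E1 x a, w s ≤ Real.exp (-(2 * n * ε ^ 2)) := fun x a =>
    chernoff_tail q hq0 hq1 (fun r => f x r a) (fun r => hf0 x r a) (fun r => hf1 x r a)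
      hε n
  have hE2bound : ∀ x a, ∑ s ∈ E2 x a, w s ≤ Real.exp (-(2 * n * ε ^ 2)) := fun x a =>
    chernoff_tail q hq0 hq1 (fun r => 1 - f x r a)
      (fun r => by linarith [hf1 x r a])
      (fun r => by linarith [hf0 x r a]) hε n
  by_contra hcon
  push_neg at hcon
  -- every sample tuple is bad, so it lies in some tail event
  have hsub : (Finset.univ : Finset (Fin n → R)) ⊆
      (Finset.univ : Finset (X × A)).biUnion (fun xa => E1 xa.1 xa.2 ∪ E2 xa.1 xa.2) := by
    intro s _
    obtain ⟨x, a, hxa⟩ := hcon s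
    rw [Finset.mem_biUnion]
    refine ⟨(x, a), Finset.mem_univ _, ?_⟩
    rw [Finset.mem_union]
    set S : ℝ := ∑ i, f x (s i) a with hS
    have hmul : (n:ℝ) * (P x a - 1 / n * S) = n * P x a - S := by
      field_simp
    have habs : (n:ℝ) * ε ≤ |(n:ℝ) * P x a - S| := by
      rw [← hmul, abs_mul, abs_of_pos hnR]
      exact mul_le_mul_of_nonneg_left hxa hnR.le
    rcases le_or_gt (n * P x a + n * ε) S with hcase | hcase
    · left
      rw [hE1, Finset.mem_filter]
      exact ⟨Finset.mem_univ _, hcase⟩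
    · right
      rw [hE2, Finset.mem_filter]
      refine ⟨Finset.mem_univ _, ?_⟩
      have hup : n * P x a - S ≥ n * ε := by
        rcases abs_cases (n * P x a - S) with ⟨heq, _⟩ | ⟨heq, _⟩
        · linarith [habs, heq]
        · exfalso; rw [heq] at habs; linarith
      have e1 : ∑ r', q r' * (1 - f x r' a) = 1 - P x a := by
        simp only [mul_sub, mul_one, Finset.sum_sub_distrib, hq1, hP]
      have e2 : ∑ i : Fin n, (1 - f x (s i) a) = n - S := by
        rw [Finset.sum_sub_distrib, Finset.sum_const, Finset.card_univ, Fintype.card_fin,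
          nsmul_eq_mul, mul_one, hS]
      rw [e1, e2]
      linarith
  -- union bound gives the contradiction
  have hle : (1:ℝ) ≤ ∑ xa : X × A, (∑ s ∈ E1 xa.1 xa.2, w s + ∑ s ∈ E2 xa.1 xa.2, w s) := by
    calc (1:ℝ) = ∑ s : Fin n → R, w s := hwtot.symm
      _ ≤ ∑ s ∈ (Finset.univ : Finset (X × A)).biUnion
            (fun xa => E1 xa.1 xa.2 ∪ E2 xa.1 xa.2), w s :=
          Finset.sum_le_sum_of_subset_of_nonneg hsub (fun s _ _ => hw0 s)
      _ ≤ ∑ xa : X × A, ∑ s ∈ E1 xa.1 xa.2 ∪ E2 xa.1 xa.2, w s :=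
          sum_biUnion_le' _ _ w hw0
      _ ≤ ∑ xa : X × A, (∑ s ∈ E1 xa.1 xa.2, w s + ∑ s ∈ E2 xa.1 xa.2, w s) := by
          refine Finset.sum_le_sum fun xa _ => ?_
          have h1 : ∑ s ∈ E1 xa.1 xa.2 ∪ E2 xa.1 xa.2, w s
              + ∑ s ∈ E1 xa.1 xa.2 ∩ E2 xa.1 xa.2, w s
              = ∑ s ∈ E1 xa.1 xa.2, w s + ∑ s ∈ E2 xa.1 xa.2, w s :=
            Finset.sum_union_inter
          have h2 : 0 ≤ ∑ s ∈ E1 xa.1 xa.2 ∩ E2 xa.1 xa.2, w s :=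
            Finset.sum_nonneg fun s _ => hw0 s
          linarith
  have hlt : ∑ xa : X × A, (∑ s ∈ E1 xa.1 xa.2, w s + ∑ s ∈ E2 xa.1 xa.2, w s)
      ≤ 2 * (K:ℝ) * M * Real.exp (-(2 * n * ε ^ 2)) := by
    calc ∑ xa : X × A, (∑ s ∈ E1 xa.1 xa.2, w s + ∑ s ∈ E2 xa.1 xa.2, w s)
        ≤ ∑ _xa : X × A, (Real.exp (-(2 * n * ε ^ 2)) + Real.exp (-(2 * n * ε ^ 2))) :=
          Finset.sum_le_sum fun xa _ =>
            add_le_add (hE1bound xa.1 xa.2) (hE2bound xa.1 xa.2)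
      _ = 2 * (K:ℝ) * M * Real.exp (-(2 * n * ε ^ 2)) := by
          rw [Finset.sum_const, Finset.card_univ, Fintype.card_prod, nsmul_eq_mul]
          push_cast [hK, hM]
          ring
  linarith
end

section
/- Let X and A be nonempty finite sets, let m ≥ 1, let R₁, …, R_m be nonempty finite sets with probability mass functions q₁, …, q_m, and let f : X × (R₁ × ⋯ × R_m) → (A → [0,1]) satisfy ∑_{a ∈ A} f(x, r)(a) = 1 for all x and r. Define p(a|x) = ∑_{r₁,…,r_m} q₁(r₁)⋯q_m(r_m)·f(x,(r₁,…,r_m))(a). Then for every ε > 0, every choice of positive reals δ₁, …, δ_m with ∑_{i=1}^m δᵢ = 1, and every choice of natural numbers n₁, …, n_m with nᵢ > ln(2|X||A|)/(2(εδᵢ)²) for each i, there exist, for each i, tuples of samples rᵢ⁽¹⁾, …, rᵢ⁽ⁿⁱ⁾ ∈ Rᵢ such that the distribution p̂(a|x) = (1/(n₁⋯n_m))·∑_{j₁=1}^{n₁}⋯∑_{j_m=1}^{n_m} f(x,(r₁⁽ʲ¹⁾,…,r_m⁽ʲᵐ⁾))(a) satisfies |p̂(a|x) − p(a|x)| < ε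 for all x ∈ X and a ∈ A. -/
open Real Finset
set_option linter.unusedSectionVars false
set_option linter.unusedVariables false
set_option maxHeartbeats 1000000
attribute [local instance] Classical.propDecidable


lemma bern_bound (p : ℝ) (hp0 : 0 ≤ p) (hp1 : p ≤ 1) (L : ℝ) :
    (1 - p) + p * Real.exp L ≤ Real.exp (p * L + L ^ 2 / 8) := by
  have hD : ∀ x : ℝ, 0 < (1 - p) + p * Real.exp x := by
    intro x
    rcases hp0.eq_or_lt with h | h
    · simp [← h]
    · have := exp_pos x
      nlinarith
  set F : ℝ → ℝ := fun x => p * x + x ^ 2 / 8 - Real.log ((1 - p) + p * Real.exp x) with hF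
  set G : ℝ → ℝ := fun x => p + x / 4 - p * Real.exp x / ((1 - p) + p * Real.exp x) with hG
  have hDd : ∀ x : ℝ, HasDerivAt (fun y => (1 - p) + p * Real.exp y) (p * Real.exp x) x := by
    intro x
    exact ((Real.hasDerivAt_exp x).const_mul p).const_add (1 - p)
  have hdF : ∀ x, HasDerivAt F (G x) x := by
    intro x
    have h1 : HasDerivAt (fun y : ℝ => p * y) (p * 1) x := (hasDerivAt_id x).const_mul p
    have h2 : HasDerivAt (fun y : ℝ => y ^ 2 / 8) ((2 * x ^ 1) / 8) x :=
      (hasDerivAt_pow 2 x).div_const 8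
    have h3 : HasDerivAt (fun y => Real.log ((1 - p) + p * Real.exp y))
        (p * Real.exp x / ((1 - p) + p * Real.exp x)) x := (hDd x).log (hD x).ne'
    have := (h1.add h2).sub h3
    refine this.congr_deriv ?_
    simp only [hG]; ring
  have hdG : ∀ x, HasDerivAt G
      (1 / 4 - (p * Real.exp x * ((1 - p) + p * Real.exp x) -
        p * Real.exp x * (p * Real.exp x)) / ((1 - p) + p * Real.exp x) ^ 2) x := by
    intro x
    have h1 : HasDerivAt (fun y : ℝ => p + y / 4) (1 / 4) x := by
      simpa using ((hasDerivAt_id x).div_const 4).const_add p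
    have h2 : HasDerivAt (fun y => p * Real.exp y / ((1 - p) + p * Real.exp y))
        ((p * Real.exp x * ((1 - p) + p * Real.exp x) -
          p * Real.exp x * (p * Real.exp x)) / ((1 - p) + p * Real.exp x) ^ 2) x :=
      ((Real.hasDerivAt_exp x).const_mul p).div (hDd x) (hD x).ne'
    exact h1.sub h2
  have hG'nonneg : ∀ x : ℝ, 0 ≤ 1 / 4 - (p * Real.exp x * ((1 - p) + p * Real.exp x) -
      p * Real.exp x * (p * Real.exp x)) / ((1 - p) + p * Real.exp x) ^ 2 := by
    intro x
    set E := p * Real.exp x with hE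
    set D := (1 - p) + p * Real.exp x with hDdef
    have hDpos : 0 < D := hD x
    have hE0 : 0 ≤ E := mul_nonneg hp0 (exp_pos x).le
    have hED : E ≤ D := by simp [hE, hDdef]; linarith
    rw [sub_nonneg, div_le_iff₀ (by positivity)]
    nlinarith [sq_nonneg (D - 2 * E)]
  have hGmono : Monotone G := monotone_of_hasDerivAt_nonneg hdG hG'nonneg
  have hG0 : G 0 = 0 := by simp [hG]
  have hF0 : F 0 = 0 := by simp [hF]
  have hFnonneg : ∀ x : ℝ, 0 ≤ F x := by
    intro x
    rcases le_total 0 x with hx | hx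
    · have hmono : MonotoneOn F (Set.Ici 0) := by
        apply monotoneOn_of_deriv_nonneg (convex_Ici 0)
        · exact (Differentiable.continuous (fun y => (hdF y).differentiableAt)).continuousOn
        · exact (Differentiable.differentiableOn (fun y => (hdF y).differentiableAt))
        · intro y hy
          rw [(hdF y).deriv]
          rw [← hG0]
          exact hGmono (le_of_lt (by simpa using hy))
      have := hmono (Set.self_mem_Ici) (Set.mem_Ici.2 hx) hx
      linarith [hF0 ▸ this]
    · have hanti : AntitoneOn F (Set.Iic 0) := by
        apply antitoneOn_of_deriv_nonpos (convex_Iic 0)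
        · exact (Differentiable.continuous (fun y => (hdF y).differentiableAt)).continuousOn
        · exact (Differentiable.differentiableOn (fun y => (hdF y).differentiableAt))
        · intro y hy
          rw [(hdF y).deriv]
          rw [← hG0]
          exact hGmono (le_of_lt (by simpa using hy))
      have := hanti (Set.mem_Iic.2 hx) (Set.self_mem_Iic) hx
      linarith [hF0 ▸ this]
    
  have := hFnonneg L
  have hlog : Real.log ((1 - p) + p * Real.exp L) ≤ p * L + L ^ 2 / 8 := by
    simp only [hF] at this; linarith
  calc (1 - p) + p * Real.exp L = Real.exp (Real.log ((1 - p) + p * Real.exp L)) :=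
        (Real.exp_log (hD L)).symm
    _ ≤ _ := Real.exp_le_exp.2 hlog

lemma mgf_bound {Ω : Type*} [Fintype Ω] (w g : Ω → ℝ)
    (hw0 : ∀ ω, 0 ≤ w ω) (hw1 : ∑ ω, w ω = 1)
    (hg0 : ∀ ω, 0 ≤ g ω) (hg1 : ∀ ω, g ω ≤ 1) (l : ℝ) :
    ∑ ω, w ω * Real.exp (l * (g ω - ∑ ω', w ω' * g ω')) ≤ Real.exp (l ^ 2 / 8) := by
  obtain ⟨μ, hμ⟩ : ∃ μ, ∑ ω', w ω' * g ω' = μ := ⟨_, rfl⟩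
  simp only [hμ]
  have hμ0 : 0 ≤ μ := hμ ▸ Finset.sum_nonneg fun ω _ => mul_nonneg (hw0 ω) (hg0 ω)
  have hμ1 : μ ≤ 1 := by
    rw [← hμ, ← hw1]
    exact Finset.sum_le_sum fun ω _ => mul_le_of_le_one_right (hw0 ω) (hg1 ω)
  have key : ∀ ω, Real.exp (l * g ω) ≤ (1 - g ω) + g ω * Real.exp l := by
    intro ω
    have h : Real.exp ((1 - g ω) • (0:ℝ) + g ω • l)
        ≤ (1 - g ω) • Real.exp 0 + g ω • Real.exp l :=
      convexOn_exp.2 (Set.mem_univ _) (Set.mem_univ _) (by linarith [hg1 ω]) (hg0 ω) (by ring)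
    simp only [smul_eq_mul, mul_zero, zero_add, Real.exp_zero, mul_one] at h
    rw [mul_comm l (g ω)]
    linarith
  calc ∑ ω, w ω * Real.exp (l * (g ω - μ))
      = Real.exp (-(l * μ)) * ∑ ω, w ω * Real.exp (l * g ω) := by
        rw [Finset.mul_sum]
        refine Finset.sum_congr rfl fun ω _ => ?_
        rw [mul_comm (Real.exp (-(l * μ))) _, mul_assoc, ← Real.exp_add]
        ring_nf
    _ ≤ Real.exp (-(l * μ)) * ((1 - μ) + μ * Real.exp l) := by
        apply mul_le_mul_of_nonneg_left _ (exp_pos _).le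
        have h2 : ∑ ω, w ω * ((1 - g ω) + g ω * Real.exp l)
            = (1 - μ) + μ * Real.exp l := by
          have : ∀ ω, w ω * ((1 - g ω) + g ω * Real.exp l)
              = w ω - w ω * g ω + (w ω * g ω) * Real.exp l := fun ω => by ring
          simp only [this, Finset.sum_add_distrib, Finset.sum_sub_distrib, hw1,
            ← Finset.sum_mul, hμ]
        rw [← h2]
        exact Finset.sum_le_sum fun ω _ => mul_le_mul_of_nonneg_left (key ω) (hw0 ω)
    _ ≤ Real.exp (-(l * μ)) * Real.exp (μ * l + l ^ 2 / 8) :=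
        mul_le_mul_of_nonneg_left (bern_bound μ hμ0 hμ1 l) (exp_pos _).le
    _ = Real.exp (l ^ 2 / 8) := by rw [← Real.exp_add]; ring_nf

lemma chernoff {Ω : Type*} [Fintype Ω] (w g : Ω → ℝ)
    (hw0 : ∀ ω, 0 ≤ w ω) (hw1 : ∑ ω, w ω = 1)
    (hg0 : ∀ ω, 0 ≤ g ω) (hg1 : ∀ ω, g ω ≤ 1)
    (t : ℝ) (ht : 0 < t) (n : ℕ) :
    ∑ τ ∈ Finset.univ.filter (fun τ : Fin n → Ω =>
        (n : ℝ) * (∑ ω', w ω' * g ω') + n * t ≤ ∑ j, g (τ j)),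
      ∏ j, w (τ j) ≤ Real.exp (-(2 * n * t ^ 2)) := by
  classical
  have hmgf := mgf_bound w g hw0 hw1 hg0 hg1 (4 * t)
  obtain ⟨μ, hμ⟩ : ∃ μ, ∑ ω', w ω' * g ω' = μ := ⟨_, rfl⟩
  simp only [hμ] at hmgf ⊢
  have step1 : ∀ τ : Fin n → Ω,
      (∏ j, w (τ j)) * Real.exp (4 * t * (∑ j, g (τ j) - n * μ - n * t)) =
      Real.exp (-(4 * n * t ^ 2)) * ∏ j, (w (τ j) * Real.exp (4 * t * (g (τ j) - μ))) := by
    intro τ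
    have hsum : ∑ j : Fin n, (4 * t * (g (τ j) - μ)) = 4 * t * ((∑ j, g (τ j)) - n * μ) := by
      rw [← Finset.mul_sum, Finset.sum_sub_distrib, Finset.sum_const, Finset.card_univ,
        Fintype.card_fin, nsmul_eq_mul]
    have e2 : (∏ j, Real.exp (4 * t * (g (τ j) - μ)))
        = Real.exp (4 * t * ((∑ j, g (τ j)) - n * μ)) := by
      rw [← Real.exp_sum, hsum]
    have e3 : Real.exp (4 * t * (∑ j, g (τ j) - (n:ℝ) * μ - n * t))
        = Real.exp (-(4 * n * t ^ 2)) * Real.exp (4 * t * ((∑ j, g (τ j)) - n * μ)) := by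
      rw [← Real.exp_add]; congr 1; ring
    rw [Finset.prod_mul_distrib, e2, e3]; ring
  calc ∑ τ ∈ Finset.univ.filter (fun τ : Fin n → Ω =>
        (n : ℝ) * μ + n * t ≤ ∑ j, g (τ j)), ∏ j, w (τ j)
      ≤ ∑ τ ∈ Finset.univ.filter (fun τ : Fin n → Ω =>
        (n : ℝ) * μ + n * t ≤ ∑ j, g (τ j)),
          (∏ j, w (τ j)) * Real.exp (4 * t * (∑ j, g (τ j) - n * μ - n * t)) := by
        refine Finset.sum_le_sum fun τ hτ => ?_
        have hτ' := (Finset.mem_filter.1 hτ).2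
        have hexp : (1 : ℝ) ≤ Real.exp (4 * t * (∑ j, g (τ j) - n * μ - n * t)) := by
          rw [← Real.exp_zero]
          apply Real.exp_le_exp.2
          have h0 : (0:ℝ) ≤ ∑ j, g (τ j) - n * μ - n * t := by linarith
          positivity
        exact le_mul_of_one_le_right (Finset.prod_nonneg fun j _ => hw0 (τ j)) hexp
    _ ≤ ∑ τ : Fin n → Ω,
          (∏ j, w (τ j)) * Real.exp (4 * t * (∑ j, g (τ j) - n * μ - n * t)) := by
        apply Finset.sum_le_sum_of_subset_of_nonneg (Finset.filter_subset _ _)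
        intro τ _ _
        exact mul_nonneg (Finset.prod_nonneg fun j _ => hw0 (τ j)) (exp_pos _).le
    _ = Real.exp (-(4 * n * t ^ 2)) *
          ∑ τ : Fin n → Ω, ∏ j, (w (τ j) * Real.exp (4 * t * (g (τ j) - μ))) := by
        rw [Finset.mul_sum]
        exact Finset.sum_congr rfl fun τ _ => step1 τ
    _ = Real.exp (-(4 * n * t ^ 2)) *
          (∑ ω, w ω * Real.exp (4 * t * (g ω - μ))) ^ n := by
        congr 1
        rw [← Fintype.prod_sum (fun (_ : Fin n) (ω : Ω) => w ω * Real.exp (4 * t * (g ω - μ)))]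
        rw [Finset.prod_const, Finset.card_univ, Fintype.card_fin]
    _ ≤ Real.exp (-(4 * n * t ^ 2)) * Real.exp ((4 * t) ^ 2 / 8) ^ n := by
        apply mul_le_mul_of_nonneg_left _ (exp_pos _).le
        apply pow_le_pow_left₀ _ hmgf n
        exact Finset.sum_nonneg fun ω _ => mul_nonneg (hw0 ω) (exp_pos _).le
    _ = Real.exp (-(2 * n * t ^ 2)) := by
        rw [← Real.exp_nat_mul, ← Real.exp_add]
        congr 1
        ring

lemma exists_good {Ω K : Type*} [Fintype Ω] [Fintype K] [Nonempty K]
    (w : Ω → ℝ) (hw0 : ∀ ω, 0 ≤ w ω) (hw1 : ∑ ω, w ω = 1)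
    (G : K → Ω → ℝ) (hG0 : ∀ k ω, 0 ≤ G k ω) (hG1 : ∀ k ω, G k ω ≤ 1)
    (t : ℝ) (ht : 0 < t) (n : ℕ)
    (hn : (n : ℝ) > Real.log (2 * Fintype.card K) / (2 * t ^ 2)) :
    ∃ τ : Fin n → Ω, ∀ k, |(1 / (n : ℝ)) * ∑ j, G k (τ j) - ∑ ω, w ω * G k ω| < t := by
  classical
  set N := Fintype.card K with hN
  have hK : 0 < N := Fintype.card_pos
  have hlogpos : 0 < Real.log (2 * N) := by
    apply Real.log_pos
    have : (1 : ℝ) ≤ N := by exact_mod_cast hK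
    linarith
  have hnpos : (0 : ℝ) < n := by
    have h1 : 0 < Real.log (2 * N) / (2 * t ^ 2) := div_pos hlogpos (by positivity)
    linarith
  have hlt : 2 * (N : ℝ) * Real.exp (-(2 * n * t ^ 2)) < 1 := by
    have h1 : Real.log (2 * N) < (n:ℝ) * (2 * t ^ 2) := (div_lt_iff₀ (show (0:ℝ) < 2 * t ^ 2 by positivity)).1 hn
    have h2 : Real.exp (-(2 * n * t ^ 2)) < Real.exp (-Real.log (2 * N)) := by
      apply Real.exp_lt_exp.2; linarith
    have h3 : Real.exp (-Real.log (2 * N)) = (2 * (N:ℝ))⁻¹ := by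
      rw [Real.exp_neg, Real.exp_log (by positivity)]
    have hNpos : (0:ℝ) < 2 * N := by positivity
    calc 2 * (N : ℝ) * Real.exp (-(2 * n * t ^ 2)) < 2 * N * (2 * (N:ℝ))⁻¹ := by
          rw [← h3]; exact mul_lt_mul_of_pos_left h2 hNpos
      _ = 1 := mul_inv_cancel₀ hNpos.ne'
  by_contra hcon
  push_neg at hcon
  -- every τ is bad for some k
  have hcover : ∀ τ : Fin n → Ω, ∃ k, t ≤ |(1 / (n : ℝ)) * ∑ j, G k (τ j) - ∑ ω, w ω * G k ω| :=
    hcon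
  -- total mass is 1
  have htotal : ∑ τ : Fin n → Ω, ∏ j, w (τ j) = 1 := by
    rw [← Fintype.prod_sum (fun (_ : Fin n) (ω : Ω) => w ω)]
    rw [Finset.prod_const, Finset.card_univ, Fintype.card_fin, hw1, one_pow]
  set Bad : K → Finset (Fin n → Ω) := fun k =>
    Finset.univ.filter (fun τ => t ≤ |(1 / (n : ℝ)) * ∑ j, G k (τ j) - ∑ ω, w ω * G k ω|)
    with hBad
  have hwnn : ∀ τ : Fin n → Ω, 0 ≤ ∏ j, w (τ j) :=
    fun τ => Finset.prod_nonneg fun j _ => hw0 (τ j)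
  -- union bound
  have hub : (1 : ℝ) ≤ ∑ k, ∑ τ ∈ Bad k, ∏ j, w (τ j) := by
    rw [← htotal]
    have hptwise : ∀ τ : Fin n → Ω, ∏ j, w (τ j)
        ≤ ∑ k, if τ ∈ Bad k then ∏ j, w (τ j) else 0 := by
      intro τ
      obtain ⟨k₀, hk₀⟩ := hcover τ
      have hmem : τ ∈ Bad k₀ := by
        rw [hBad]; exact Finset.mem_filter.2 ⟨Finset.mem_univ _, hk₀⟩
      calc ∏ j, w (τ j) = (if τ ∈ Bad k₀ then ∏ j, w (τ j) else 0) := by simp [hmem]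
        _ ≤ ∑ k, if τ ∈ Bad k then ∏ j, w (τ j) else 0 := by
            refine Finset.single_le_sum (f := fun k => if τ ∈ Bad k then ∏ j, w (τ j) else 0)
              (fun k _ => ?_) (Finset.mem_univ k₀)
            by_cases hmk : τ ∈ Bad k
            · simp [hmk, hwnn τ]
            · simp [hmk]
    calc ∑ τ : Fin n → Ω, ∏ j, w (τ j)
        ≤ ∑ τ : Fin n → Ω, ∑ k, if τ ∈ Bad k then ∏ j, w (τ j) else 0 :=
          Finset.sum_le_sum fun τ _ => hptwise τ
      _ = ∑ k, ∑ τ : Fin n → Ω, if τ ∈ Bad k then ∏ j, w (τ j) else 0 :=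
          Finset.sum_comm
      _ = ∑ k, ∑ τ ∈ Bad k, ∏ j, w (τ j) := by
          refine Finset.sum_congr rfl fun k _ => ?_
          rw [Finset.sum_ite_mem, Finset.univ_inter]
  -- per-k bound
  have hperk : ∀ k, ∑ τ ∈ Bad k, ∏ j, w (τ j) ≤ 2 * Real.exp (-(2 * n * t ^ 2)) := by
    intro k
    set Badp : Finset (Fin n → Ω) := Finset.univ.filter (fun τ =>
      (n : ℝ) * (∑ ω', w ω' * G k ω') + n * t ≤ ∑ j, G k (τ j)) with hBadp
    set Badm : Finset (Fin n → Ω) := Finset.univ.filter (fun τ =>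
      (n : ℝ) * (∑ ω', w ω' * (1 - G k ω')) + n * t ≤ ∑ j, (1 - G k (τ j))) with hBadm
    have hsub : Bad k ⊆ Badp ∪ Badm := by
      intro τ hτ
      have hτ' := (Finset.mem_filter.1 hτ).2
      rw [Finset.mem_union]
      rcases le_abs.1 hτ' with h | h
      · left
        rw [hBadp, Finset.mem_filter]
        refine ⟨Finset.mem_univ _, ?_⟩
        have key : (n:ℝ) * ((1 / (n : ℝ)) * ∑ j, G k (τ j) - ∑ ω, w ω * G k ω)
            = (∑ j, G k (τ j)) - n * ∑ ω, w ω * G k ω := by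
          field_simp
        have h2 := mul_le_mul_of_nonneg_left h hnpos.le
        rw [key] at h2
        linarith
      · right
        rw [hBadm, Finset.mem_filter]
        refine ⟨Finset.mem_univ _, ?_⟩
        have hSm : ∑ j : Fin n, (1 - G k (τ j)) = (n:ℝ) - ∑ j, G k (τ j) := by
          rw [Finset.sum_sub_distrib, Finset.sum_const, Finset.card_univ,
            Fintype.card_fin, nsmul_eq_mul, mul_one]
        have hμm : ∑ ω', w ω' * (1 - G k ω') = 1 - ∑ ω', w ω' * G k ω' := by
          have : ∀ ω', w ω' * (1 - G k ω') = w ω' - w ω' * G k ω' := fun ω' => by ring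
          rw [Finset.sum_congr rfl fun ω' _ => this ω', Finset.sum_sub_distrib, hw1]
        have key : (n:ℝ) * (-((1 / (n : ℝ)) * ∑ j, G k (τ j) - ∑ ω, w ω * G k ω))
            = (n:ℝ) * ∑ ω, w ω * G k ω - ∑ j, G k (τ j) := by
          field_simp
          ring
        have h2 := mul_le_mul_of_nonneg_left h hnpos.le
        rw [key] at h2
        rw [hSm, hμm]
        linarith
    have hp := chernoff w (G k) hw0 hw1 (hG0 k) (hG1 k) t ht n
    have hm := chernoff w (fun ω => 1 - G k ω) hw0 hw1
      (fun ω => show (0:ℝ) ≤ 1 - G k ω by linarith [hG1 k ω])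
      (fun ω => show (1:ℝ) - G k ω ≤ 1 by linarith [hG0 k ω]) t ht n
    calc ∑ τ ∈ Bad k, ∏ j, w (τ j) ≤ ∑ τ ∈ Badp ∪ Badm, ∏ j, w (τ j) :=
          Finset.sum_le_sum_of_subset_of_nonneg hsub (fun τ _ _ => hwnn τ)
      _ ≤ (∑ τ ∈ Badp, ∏ j, w (τ j)) + ∑ τ ∈ Badm, ∏ j, w (τ j) := by
          have hui := Finset.sum_union_inter (s₁ := Badp) (s₂ := Badm)
            (f := fun τ : Fin n → Ω => ∏ j, w (τ j))
          have hint : 0 ≤ ∑ τ ∈ Badp ∩ Badm, ∏ j, w (τ j) :=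
            Finset.sum_nonneg fun τ _ => hwnn τ
          linarith
      _ ≤ Real.exp (-(2 * n * t ^ 2)) + Real.exp (-(2 * n * t ^ 2)) := add_le_add hp hm
      _ = 2 * Real.exp (-(2 * n * t ^ 2)) := by ring
  have hfinal : (1:ℝ) ≤ 2 * N * Real.exp (-(2 * n * t ^ 2)) := by
    calc (1:ℝ) ≤ ∑ k, ∑ τ ∈ Bad k, ∏ j, w (τ j) := hub
      _ ≤ ∑ _k : K, 2 * Real.exp (-(2 * n * t ^ 2)) := Finset.sum_le_sum fun k _ => hperk k
      _ = 2 * N * Real.exp (-(2 * n * t ^ 2)) := by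
          rw [Finset.sum_const, Finset.card_univ, nsmul_eq_mul, hN]; ring
  linarith

section Network

variable {X A : Type*} [Fintype X] [Fintype A]
variable {m : ℕ} {R : Fin m → Type*} [∀ i, Fintype (R i)]

/-- The network distribution generated by the map `f` and independent sources `w`. -/
noncomputable def Pnet (f : X → ((i : Fin m) → R i) → A → ℝ)
    (w : (i : Fin m) → R i → ℝ) (x : X) (a : A) : ℝ :=
  ∑ r : (i : Fin m) → R i, (∏ i, w i (r i)) * f x r a

/-- Empirical distribution of a tuple of samples. -/
noncomputable def empPMF {R' : Type*} [Fintype R'] {N : ℕ} (τ : Fin N → R') : R' → ℝ :=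
  fun ρ => ((Finset.univ.filter (fun j => τ j = ρ)).card : ℝ) / N

/-- A family of weights is a pmf family. -/
def IsPMF {R' : Type*} [Fintype R'] (w : R' → ℝ) : Prop :=
  (∀ ρ, 0 ≤ w ρ) ∧ ∑ ρ, w ρ = 1

lemma empPMF_isPMF {R' : Type*} [Fintype R'] {N : ℕ} (hN : 0 < N) (τ : Fin N → R') :
    IsPMF (empPMF τ) := by
  classical
  constructor
  · intro ρ; unfold empPMF; positivity
  · unfold empPMF
    rw [← Finset.sum_div]
    rw [div_eq_one_iff_eq (by exact_mod_cast hN.ne')]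
    rw [← Nat.cast_sum]
    congr 1
    have htot := Finset.card_eq_sum_card_fiberwise
      (fun (j : Fin N) (_ : j ∈ (Finset.univ : Finset (Fin N))) => Finset.mem_univ (τ j))
    rw [← htot, Finset.card_univ, Fintype.card_fin]

lemma prod_isPMF (w : (i : Fin m) → R i → ℝ) (hw : ∀ i, IsPMF (w i)) :
    ∑ r : (i : Fin m) → R i, ∏ i, w i (r i) = 1 := by
  classical
  rw [← Fintype.prod_sum (fun (i : Fin m) (ρ : R i) => w i ρ)]
  exact Finset.prod_eq_one fun i _ => (hw i).2

lemma Pnet_nonneg (f : X → ((i : Fin m) → R i) → A → ℝ)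
    (hf0 : ∀ x r a, 0 ≤ f x r a)
    (w : (i : Fin m) → R i → ℝ) (hw : ∀ i, IsPMF (w i)) (x : X) (a : A) :
    0 ≤ Pnet f w x a :=
  Finset.sum_nonneg fun r _ => mul_nonneg
    (Finset.prod_nonneg fun i _ => (hw i).1 (r i)) (hf0 x r a)

lemma Pnet_le_one (f : X → ((i : Fin m) → R i) → A → ℝ)
    (hf0 : ∀ x r a, 0 ≤ f x r a) (hf1 : ∀ x r a, f x r a ≤ 1)
    (w : (i : Fin m) → R i → ℝ) (hw : ∀ i, IsPMF (w i)) (x : X) (a : A) :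
    Pnet f w x a ≤ 1 := by
  calc Pnet f w x a ≤ ∑ r : (i : Fin m) → R i, ∏ i, w i (r i) :=
        Finset.sum_le_sum fun r _ => mul_le_of_le_one_right
          (Finset.prod_nonneg fun i _ => (hw i).1 (r i)) (hf1 x r a)
    _ = 1 := prod_isPMF w hw

lemma Pnet_update (f : X → ((i : Fin m) → R i) → A → ℝ)
    (w : (i : Fin m) → R i → ℝ) (i₀ : Fin m) (u : R i₀ → ℝ) (x : X) (a : A) :
    Pnet f (Function.update w i₀ u) x a
      = ∑ ρ, u ρ *
          Pnet f (Function.update w i₀ (fun ρ' => if ρ' = ρ then (1:ℝ) else 0)) x a := by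
  classical
  have hprod : ∀ (v : R i₀ → ℝ) (r : (i : Fin m) → R i),
      ∏ i, Function.update w i₀ v i (r i)
        = v (r i₀) * ∏ i ∈ Finset.univ.erase i₀, w i (r i) := by
    intro v r
    rw [← Finset.mul_prod_erase Finset.univ
      (fun i => Function.update w i₀ v i (r i)) (Finset.mem_univ i₀)]
    rw [Function.update_self]
    congr 1
    refine Finset.prod_congr rfl fun i hi => ?_
    rw [Function.update_of_ne (Finset.ne_of_mem_erase hi)]
  unfold Pnet
  calc ∑ r : (i : Fin m) → R i, (∏ i, Function.update w i₀ u i (r i)) * f x r a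
      = ∑ r : (i : Fin m) → R i,
          u (r i₀) * ((∏ i ∈ Finset.univ.erase i₀, w i (r i)) * f x r a) := by
        refine Finset.sum_congr rfl fun r _ => ?_
        rw [hprod u r]; ring
    _ = ∑ r : (i : Fin m) → R i, ∑ ρ,
          (if r i₀ = ρ then u ρ * ((∏ i ∈ Finset.univ.erase i₀, w i (r i)) * f x r a)
           else 0) := by
        refine Finset.sum_congr rfl fun r _ => ?_
        rw [Finset.sum_ite_eq Finset.univ (r i₀)
          (fun ρ => u ρ * ((∏ i ∈ Finset.univ.erase i₀, w i (r i)) * f x r a))]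
        simp
    _ = ∑ ρ, ∑ r : (i : Fin m) → R i,
          (if r i₀ = ρ then u ρ * ((∏ i ∈ Finset.univ.erase i₀, w i (r i)) * f x r a)
           else 0) := Finset.sum_comm
    _ = ∑ ρ, u ρ *
          ∑ r : (i : Fin m) → R i,
            (∏ i, Function.update w i₀ (fun ρ' => if ρ' = ρ then (1:ℝ) else 0) i (r i))
              * f x r a := by
        refine Finset.sum_congr rfl fun ρ _ => ?_
        rw [Finset.mul_sum]
        refine Finset.sum_congr rfl fun r _ => ?_
        rw [hprod (fun ρ' => if ρ' = ρ then (1:ℝ) else 0) r]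
        by_cases h : r i₀ = ρ
        · rw [if_pos h, if_pos h]; ring
        · rw [if_neg h, if_neg h]; ring

lemma emp_avg {R' : Type*} [Fintype R'] {N : ℕ} (hN : 0 < N) (τ : Fin N → R')
    (g : R' → ℝ) :
    ∑ ρ, empPMF τ ρ * g ρ = (1 / (N : ℝ)) * ∑ j, g (τ j) := by
  classical
  have h1 : ∑ j, g (τ j)
      = ∑ ρ, ((Finset.univ.filter (fun j => τ j = ρ)).card : ℝ) * g ρ := by
    rw [← Finset.sum_fiberwise' Finset.univ τ g]
    refine Finset.sum_congr rfl fun ρ _ => ?_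
    rw [Finset.sum_const, nsmul_eq_mul]
  rw [h1, Finset.mul_sum]
  refine Finset.sum_congr rfl fun ρ _ => ?_
  unfold empPMF
  field_simp


/-- One compression step: replace the pmf at coordinate `i₀` by an empirical one. -/
lemma step_lemma [Nonempty X] [Nonempty A]
    (f : X → ((i : Fin m) → R i) → A → ℝ)
    (hf0 : ∀ x r a, 0 ≤ f x r a) (hf1 : ∀ x r a, f x r a ≤ 1)
    (w : (i : Fin m) → R i → ℝ) (hw : ∀ i, IsPMF (w i))
    (i₀ : Fin m) (t : ℝ) (ht : 0 < t) (N : ℕ)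
    (hN : (N : ℝ) > Real.log (2 * Fintype.card X * Fintype.card A) / (2 * t ^ 2)) :
    ∃ τ : Fin N → R i₀, ∀ x a,
      |Pnet f (Function.update w i₀ (empPMF τ)) x a - Pnet f w x a| < t := by
  classical
  have hNpos : 0 < N := by
    have h1 : (1:ℝ) ≤ Fintype.card X := by exact_mod_cast Fintype.card_pos
    have h2 : (1:ℝ) ≤ Fintype.card A := by exact_mod_cast Fintype.card_pos
    have hc2 : (2:ℝ) ≤ 2 * Fintype.card X * Fintype.card A := by nlinarith
    have hlp : 0 < Real.log (2 * Fintype.card X * Fintype.card A) :=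
      Real.log_pos (by linarith)
    have hNr : (0:ℝ) < N := lt_of_le_of_lt (by positivity : (0:ℝ) ≤ _) hN
    exact_mod_cast hNr
  set G : X × A → R i₀ → ℝ := fun k ρ =>
    Pnet f (Function.update w i₀ (fun ρ' => if ρ' = ρ then (1:ℝ) else 0)) k.1 k.2 with hG
  have hdirac : ∀ ρ : R i₀, ∀ i, IsPMF (Function.update w i₀
      (fun ρ' => if ρ' = ρ then (1:ℝ) else 0) i) := by
    intro ρ i
    by_cases h : i = i₀
    · subst h
      rw [Function.update_self]
      constructor
      · intro ρ'; by_cases hh : ρ' = ρ <;> simp [hh]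
      · rw [Finset.sum_ite_eq' Finset.univ ρ (fun _ => (1:ℝ))]
        simp
    · rw [Function.update_of_ne h]; exact hw i
  have hG0 : ∀ k ρ, 0 ≤ G k ρ := fun k ρ =>
    Pnet_nonneg f hf0 _ (hdirac ρ) k.1 k.2
  have hG1 : ∀ k ρ, G k ρ ≤ 1 := fun k ρ =>
    Pnet_le_one f hf0 hf1 _ (hdirac ρ) k.1 k.2
  have hcard : (2:ℝ) * (Fintype.card (X × A)) = 2 * Fintype.card X * Fintype.card A := by
    rw [Fintype.card_prod]; push_cast; ring
  obtain ⟨τ, hτ⟩ := exists_good (w i₀) (hw i₀).1 (hw i₀).2 G hG0 hG1 t ht N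
    (by rw [hcard]; exact hN)
  refine ⟨τ, fun x a => ?_⟩
  have h1 : Pnet f (Function.update w i₀ (empPMF τ)) x a
      = (1 / (N:ℝ)) * ∑ j, G (x, a) (τ j) := by
    rw [Pnet_update f w i₀ (empPMF τ) x a]
    exact emp_avg hNpos τ (fun ρ => G (x, a) ρ)
  have h2 : Pnet f w x a = ∑ ρ, w i₀ ρ * G (x, a) ρ := by
    conv_lhs => rw [← Function.update_eq_self i₀ w]
    exact Pnet_update f w i₀ (w i₀) x a
  rw [h1, h2]
  exact hτ (x, a)

/-- The empirical product distribution gives the average over sample tuples. -/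
lemma Pnet_emp (f : X → ((i : Fin m) → R i) → A → ℝ)
    (n : Fin m → ℕ) (hn : ∀ i, 0 < n i)
    (s : (i : Fin m) → Fin (n i) → R i) (x : X) (a : A) :
    Pnet f (fun i => empPMF (s i)) x a
      = (1 / ∏ i, (n i : ℝ)) *
          ∑ j : (i : Fin m) → Fin (n i), f x (fun i => s i (j i)) a := by
  classical
  have hfib : ∑ j : (i : Fin m) → Fin (n i), f x (fun i => s i (j i)) a
      = ∑ r : (i : Fin m) → R i,
          ((Finset.univ.filter
            (fun j : (i : Fin m) → Fin (n i) => (fun i => s i (j i)) = r)).card : ℝ)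
            * f x r a := by
    rw [← Finset.sum_fiberwise' Finset.univ
      (fun j : (i : Fin m) → Fin (n i) => fun i => s i (j i)) (fun r => f x r a)]
    refine Finset.sum_congr rfl fun r _ => ?_
    rw [Finset.sum_const, nsmul_eq_mul]
  have hcard : ∀ r : (i : Fin m) → R i,
      (Finset.univ.filter
        (fun j : (i : Fin m) → Fin (n i) => (fun i => s i (j i)) = r)).card
      = ∏ i, (Finset.univ.filter (fun b : Fin (n i) => s i b = r i)).card := by
    intro r
    rw [← Fintype.card_subtype]
    have e : {j : (i : Fin m) → Fin (n i) // (fun i => s i (j i)) = r}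
        ≃ ((i : Fin m) → {b : Fin (n i) // s i b = r i}) :=
      (Equiv.subtypeEquivRight (fun j => funext_iff)).trans
        (Equiv.subtypePiEquivPi (p := fun i b => s i b = r i))
    rw [Fintype.card_congr e, Fintype.card_pi]
    exact Finset.prod_congr rfl fun i _ => Fintype.card_subtype _
  unfold Pnet empPMF
  rw [hfib, Finset.mul_sum]
  refine Finset.sum_congr rfl fun r _ => ?_
  rw [hcard r]
  rw [Finset.prod_div_distrib]
  push_cast
  have hprodn : (0:ℝ) < ∏ i, (n i : ℝ) := by
    apply Finset.prod_pos; intro i _; exact_mod_cast hn i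
  ring

end Network

/-- Hybrid weight family: sources below `k` are compressed, the rest untouched. -/
noncomputable def hybrid {m : ℕ} {R : Fin m → Type*} [∀ i, Fintype (R i)]
    (q : (i : Fin m) → R i → ℝ) (n : Fin m → ℕ) (k : ℕ)
    (s : (i : Fin m) → Fin (n i) → R i) : (i : Fin m) → R i → ℝ :=
  fun i => if (i : ℕ) < k then empPMF (s i) else q i

theorem stmt_1' {X A : Type*} [Fintype X] [Fintype A] [Nonempty X] [Nonempty A]
    (m : ℕ) (hm : 1 ≤ m)
    (R : Fin m → Type*) [∀ i, Fintype (R i)] [∀ i, Nonempty (R i)]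
    (q : (i : Fin m) → R i → ℝ)
    (hq0 : ∀ i r, 0 ≤ q i r) (hq1 : ∀ i, ∑ r, q i r = 1)
    (f : X → ((i : Fin m) → R i) → A → ℝ)
    (hf0 : ∀ x r a, 0 ≤ f x r a) (hf1 : ∀ x r a, f x r a ≤ 1)
    (hfsum : ∀ x r, ∑ a, f x r a = 1)
    (ε : ℝ) (hε : 0 < ε)
    (δ : Fin m → ℝ) (hδ : ∀ i, 0 < δ i) (hδ1 : ∑ i, δ i = 1)
    (n : Fin m → ℕ)
    (hn : ∀ i, (n i : ℝ) >
      Real.log (2 * Fintype.card X * Fintype.card A) / (2 * (ε * δ i) ^ 2)) :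
    ∃ s : (i : Fin m) → Fin (n i) → R i, ∀ (x : X) (a : A),
      |(1 / ∏ i, (n i : ℝ)) *
          (∑ j : (i : Fin m) → Fin (n i), f x (fun i => s i (j i)) a) -
        (∑ r : (i : Fin m) → R i, (∏ i, q i (r i)) * f x r a)| < ε := by
  classical
  have hX1 : (1:ℝ) ≤ Fintype.card X := by exact_mod_cast Fintype.card_pos
  have hA1 : (1:ℝ) ≤ Fintype.card A := by exact_mod_cast Fintype.card_pos
  have hlp : 0 < Real.log (2 * Fintype.card X * Fintype.card A) :=
    Real.log_pos (by nlinarith)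
  have hnpos : ∀ i, 0 < n i := by
    intro i
    have h : (0:ℝ) < n i :=
      lt_of_le_of_lt (by positivity : (0:ℝ) ≤ _) (hn i)
    exact_mod_cast h
  have hqpmf : ∀ i, IsPMF (q i) := fun i => ⟨hq0 i, hq1 i⟩
  have hWpmf : ∀ k s i, IsPMF (hybrid q n k s i) := by
    intro k s i
    unfold hybrid
    split
    · exact empPMF_isPMF (hnpos i) (s i)
    · exact hqpmf i
  have hW0 : ∀ s, hybrid q n 0 s = q := by
    intro s; funext i; unfold hybrid; simp
  have claim : ∀ k : ℕ, k ≤ m → ∃ s : (i : Fin m) → Fin (n i) → R i,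
      (∀ x a, |Pnet f (hybrid q n k s) x a - Pnet f q x a|
        ≤ ε * ∑ i ∈ Finset.univ.filter (fun i : Fin m => (i:ℕ) < k), δ i)
      ∧ (1 ≤ k → ∀ x a, |Pnet f (hybrid q n k s) x a - Pnet f q x a|
        < ε * ∑ i ∈ Finset.univ.filter (fun i : Fin m => (i:ℕ) < k), δ i) := by
    intro k
    induction k with
    | zero =>
      intro _
      refine ⟨Classical.arbitrary _, fun x a => ?_, fun h => absurd h (by omega)⟩
      rw [hW0]
      simp
    | succ j ih =>
      intro hjm
      obtain ⟨s, hs, _⟩ := ih (by omega)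
      set i₀ : Fin m := ⟨j, by omega⟩ with hi₀
      obtain ⟨τ, hτ⟩ := step_lemma f hf0 hf1 (hybrid q n j s) (hWpmf j s) i₀ (ε * δ i₀)
        (mul_pos hε (hδ i₀)) (n i₀) (hn i₀)
      set s' := Function.update s i₀ τ with hs'
      have hWeq : hybrid q n (j+1) s' = Function.update (hybrid q n j s) i₀ (empPMF τ) := by
        funext i
        by_cases h : i = i₀
        · subst h
          rw [Function.update_self]
          unfold hybrid
          rw [if_pos (by simp [hi₀]), hs', Function.update_self]
        · rw [Function.update_of_ne h]
          have hij : (i:ℕ) ≠ j := fun hh => h (Fin.ext (by simp [hi₀, hh]))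
          have hs'i : s' i = s i := Function.update_of_ne h τ s
          unfold hybrid
          rw [hs'i]
          by_cases hlt : (i:ℕ) < j
          · rw [if_pos (by omega), if_pos hlt]
          · rw [if_neg (by omega), if_neg hlt]
      have hfil : Finset.univ.filter (fun i : Fin m => (i:ℕ) < j+1)
          = insert i₀ (Finset.univ.filter (fun i : Fin m => (i:ℕ) < j)) := by
        ext i
        simp only [Finset.mem_filter, Finset.mem_insert, Finset.mem_univ, true_and]
        constructor
        · intro hh
          by_cases hij : (i:ℕ) = j
          · exact Or.inl (Fin.ext (by simp [hi₀, hij]))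
          · exact Or.inr (by omega)
        · rintro (rfl | hh)
          · simp [hi₀]
          · omega
      have hnotmem : i₀ ∉ Finset.univ.filter (fun i : Fin m => (i:ℕ) < j) := by
        simp [hi₀]
      have hsum : ∑ i ∈ Finset.univ.filter (fun i : Fin m => (i:ℕ) < j+1), δ i
          = δ i₀ + ∑ i ∈ Finset.univ.filter (fun i : Fin m => (i:ℕ) < j), δ i := by
        rw [hfil, Finset.sum_insert hnotmem]
      have tri : ∀ x a, |Pnet f (hybrid q n (j+1) s') x a - Pnet f q x a|
          < ε * ∑ i ∈ Finset.univ.filter (fun i : Fin m => (i:ℕ) < j+1), δ i := by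
        intro x a
        rw [hWeq, hsum, mul_add]
        calc |Pnet f (Function.update (hybrid q n j s) i₀ (empPMF τ)) x a - Pnet f q x a|
            ≤ |Pnet f (Function.update (hybrid q n j s) i₀ (empPMF τ)) x a
                - Pnet f (hybrid q n j s) x a|
              + |Pnet f (hybrid q n j s) x a - Pnet f q x a| := abs_sub_le _ _ _
          _ < ε * δ i₀ + ε * ∑ i ∈ Finset.univ.filter (fun i : Fin m => (i:ℕ) < j), δ i :=
              add_lt_add_of_lt_of_le (hτ x a) (hs x a)
      exact ⟨s', fun x a => (tri x a).le, fun _ x a => tri x a⟩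
  obtain ⟨s, _, hstrict⟩ := claim m le_rfl
  refine ⟨s, fun x a => ?_⟩
  have h1 := hstrict hm x a
  have hfilm : Finset.univ.filter (fun i : Fin m => (i:ℕ) < m) = Finset.univ := by
    ext i; simp [i.isLt]
  rw [hfilm, hδ1, mul_one] at h1
  have hWm : hybrid q n m s = fun i => empPMF (s i) := by
    funext i; unfold hybrid; rw [if_pos i.isLt]
  rw [hWm] at h1
  rw [← Pnet_emp f n hnpos s x a]
  exact h1


/-- compressing `m` independent randomness sources in succession.
Given the network distribution `p(a|x) = ∑ r, (∏ i, qᵢ(rᵢ)) * f x r a`, for every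
`ε > 0`, positive reals `δ₁,…,δ_m` summing to `1`, and naturals `nᵢ > ln(2|X||A|)/(2(εδᵢ)²)`,
there exist sample tuples for each source whose joint empirical average reproduces
`p(a|x)` up to `ε`. -/
theorem stmt_1 {X A : Type*} [Fintype X] [Fintype A] [Nonempty X] [Nonempty A]
    (m : ℕ) (hm : 1 ≤ m)
    (R : Fin m → Type*) [∀ i, Fintype (R i)] [∀ i, Nonempty (R i)]
    (q : (i : Fin m) → R i → ℝ)
    (hq0 : ∀ i r, 0 ≤ q i r) (hq1 : ∀ i, ∑ r, q i r = 1)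
    (f : X → ((i : Fin m) → R i) → A → ℝ)
    (hf0 : ∀ x r a, 0 ≤ f x r a) (hf1 : ∀ x r a, f x r a ≤ 1)
    (hfsum : ∀ x r, ∑ a, f x r a = 1)
    (ε : ℝ) (hε : 0 < ε)
    (δ : Fin m → ℝ) (hδ : ∀ i, 0 < δ i) (hδ1 : ∑ i, δ i = 1)
    (n : Fin m → ℕ)
    (hn : ∀ i, (n i : ℝ) >
      Real.log (2 * Fintype.card X * Fintype.card A) / (2 * (ε * δ i) ^ 2)) :
    ∃ s : (i : Fin m) → Fin (n i) → R i, ∀ (x : X) (a : A),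
      |(1 / ∏ i, (n i : ℝ)) *
          (∑ j : (i : Fin m) → Fin (n i), f x (fun i => s i (j i)) a) -
        (∑ r : (i : Fin m) → R i, (∏ i, q i (r i)) * f x r a)| < ε := by
  exact stmt_1' m hm R q hq0 hq1 f hf0 hf1 hfsum ε hε δ hδ hδ1 n hn
end

section
/- Let h ≥ 2, let A be a finite set, let R be a finite set with probability mass function p, and for each party i ∈ {1,…,h} let p_{A_i} : R → (A → [0,1]) be a strategy with ∑_{a ∈ A} p_{A_i}(r)(a) = 1 for all r. Suppose the generated distribution ∑_{r ∈ R} p(r)·p_{A_1}(r)(a₁)⋯p_{A_h}(r)(a_h) equals 𝟙[a₁ = a₂ = ⋯ = a_h]·q(a₁) for some probability mass function q on A. Then the strategy p_{A_1} is deterministic: for every r with p(r) > 0 there exists a ∈ A such that p_{A_1}(r)(a) = 1. -/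
/-- in the no-input multipartite Bell scenario, if the shared-randomness
strategies generate the perfectly correlated distribution `𝟙[a₁ = ⋯ = a_h]·q(a₁)`,
then party 1's strategy is deterministic on the support of `p`. -/
theorem stmt_3 {A R : Type*} [Fintype A] [Fintype R] [DecidableEq A]
    (h : ℕ) (hh : 2 ≤ h)
    (p : R → ℝ) (hp0 : ∀ r, 0 ≤ p r) (hp1 : ∑ r, p r = 1)
    (q : A → ℝ) (hq0 : ∀ a, 0 ≤ q a) (hq1 : ∑ a, q a = 1)
    (pA : Fin h → R → A → ℝ)
    (hpA0 : ∀ i r a, 0 ≤ pA i r a) (hpA1 : ∀ i r a, pA i r a ≤ 1)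
    (hpAsum : ∀ i r, ∑ a, pA i r a = 1)
    (hgen : ∀ a : Fin h → A,
      ∑ r, p r * ∏ i, pA i r (a i) =
        if ∀ i, a i = a ⟨0, by omega⟩ then q (a ⟨0, by omega⟩) else 0) :
    ∀ r, 0 < p r → ∃ a : A, pA ⟨0, by omega⟩ r a = 1 := by
  intro r hr
  have hc : ∀ i : Fin h, ∃ a, 0 < pA i r a := by
    intro i
    by_contra hcon
    push_neg at hcon
    have hz : ∀ a, pA i r a = 0 := fun a => le_antisymm (hcon a) (hpA0 i r a)
    have := hpAsum i r
    simp [hz] at this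
  choose c hcpos using hc
  have i0 : Fin h := ⟨0, by omega⟩
  set i1 : Fin h := ⟨1, by omega⟩ with hi1
  have key : ∀ a, 0 < pA ⟨0, by omega⟩ r a → a = c i1 := by
    intro a ha
    set t : Fin h → A := fun i => if i = ⟨0, by omega⟩ then a else c i with ht
    have hterm : 0 < p r * ∏ i, pA i r (t i) := by
      apply mul_pos hr
      apply Finset.prod_pos
      intro i _
      by_cases h0 : i = ⟨0, by omega⟩ <;> simp [t, h0, ha, hcpos]
    have hsum : 0 < ∑ r', p r' * ∏ i, pA i r' (t i) := by
      apply Finset.sum_pos'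
      · intro r' _
        exact mul_nonneg (hp0 r') (Finset.prod_nonneg fun i _ => hpA0 i r' _)
      · exact ⟨r, Finset.mem_univ r, hterm⟩
    rw [hgen t] at hsum
    by_cases hcond : ∀ i, t i = t ⟨0, by omega⟩
    · have h1 := hcond i1
      have h10 : i1 ≠ (⟨0, by omega⟩ : Fin h) := by
        simp [hi1, Fin.ext_iff]
      simpa [t, h10] using h1.symm
    · simp [hcond] at hsum
  have hz : ∀ a, a ≠ c i1 → pA ⟨0, by omega⟩ r a = 0 := by
    intro a hne
    by_contra h0
    exact hne (key a (lt_of_le_of_ne (hpA0 _ r a) (Ne.symm h0)))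
  refine ⟨c i1, ?_⟩
  have hsingle : (∑ a, pA ⟨0, by omega⟩ r a) = pA ⟨0, by omega⟩ r (c i1) :=
    Finset.sum_eq_single (c i1) (fun b _ hb => hz b hb) (by simp)
  rw [← hsingle, hpAsum]
end

section
/- Let X be a nonempty finite set, let R be a finite set with probability mass function p, and let p_A, p_B : X × R → ({0,1} → [0,1]) be strategies with ∑_{a ∈ {0,1}} p_A(x,r)(a) = 1 and ∑_{a ∈ {0,1}} p_B(x,r)(a) = 1 for all x, r. Suppose that for all x₁, x₂ ∈ X and a₁, a₂ ∈ {0,1}, ∑_{r ∈ R} p(r)·p_A(x₁,r)(a₁)·p_B(x₂,r)(a₂) equals 1/2 if a₁ = a₂ and x₁ = x₂, equals 0 if a₁ ≠ a₂ and x₁ = x₂, and equals 1/4 if x₁ ≠ x₂. Then the strategy p_A is deterministic: for every x ∈ X and every r with p(r) > 0 there exists a ∈ {0,1} such that p_A(x,r)(a) = 1. -/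
/-- in the two-party Bell scenario with common input set `X` and binary
outputs, if the shared-randomness strategies generate the distribution that is
`1/2` when `a₁ = a₂, x₁ = x₂`, `0` when `a₁ ≠ a₂, x₁ = x₂`, and `1/4` when `x₁ ≠ x₂`,
then Alice's strategy is deterministic on the support of `p`. -/
theorem stmt_7 {X R : Type*} [Fintype X] [Nonempty X] [DecidableEq X] [Fintype R]
    (p : R → ℝ) (hp0 : ∀ r, 0 ≤ p r) (hp1 : ∑ r, p r = 1)
    (pA pB : X → R → Bool → ℝ)
    (hpA0 : ∀ x r a, 0 ≤ pA x r a) (hpA1 : ∀ x r a, pA x r a ≤ 1)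
    (hpB0 : ∀ x r a, 0 ≤ pB x r a) (hpB1 : ∀ x r a, pB x r a ≤ 1)
    (hpAsum : ∀ x r, ∑ a, pA x r a = 1) (hpBsum : ∀ x r, ∑ a, pB x r a = 1)
    (hgen : ∀ (x₁ x₂ : X) (a₁ a₂ : Bool),
      ∑ r, p r * pA x₁ r a₁ * pB x₂ r a₂ =
        if x₁ = x₂ then (if a₁ = a₂ then 1 / 2 else 0) else 1 / 4) :
    ∀ (x : X) (r : R), 0 < p r → ∃ a : Bool, pA x r a = 1 := by
  intro x r hr
  have key : ∀ (a b : Bool), a ≠ b → p r * pA x r a * pB x r b = 0 := by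
    intro a b hab
    have hsum := hgen x x a b
    rw [if_pos rfl, if_neg hab] at hsum
    exact (Finset.sum_eq_zero_iff_of_nonneg (fun i _ =>
      mul_nonneg (mul_nonneg (hp0 i) (hpA0 x i a)) (hpB0 x i b))).mp hsum r
      (Finset.mem_univ r)
  have hAsum : pA x r true + pA x r false = 1 := by
    have := hpAsum x r; rwa [Fintype.sum_bool] at this
  have hBsum : pB x r true + pB x r false = 1 := by
    have := hpBsum x r; rwa [Fintype.sum_bool] at this
  by_cases h : pA x r true = 0
  · exact ⟨false, by linarith⟩
  · refine ⟨true, ?_⟩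
    have h1 := key true false (by simp)
    have hBf : pB x r false = 0 := by
      rcases mul_eq_zero.mp h1 with h' | h'
      · rcases mul_eq_zero.mp h' with h'' | h''
        · linarith
        · exact absurd h'' h
      · exact h'
    have hBt : pB x r true = 1 := by linarith
    have h2 := key false true (by simp)
    have hAf : pA x r false = 0 := by
      rcases mul_eq_zero.mp h2 with h' | h'
      · rcases mul_eq_zero.mp h' with h'' | h''
        · linarith
        · exact h''
      · rw [hBt] at h'; linarith
    linarith
end

section
/- Let X be a nonempty finite set, let R be a finite set with probability mass function p, and let strategies p_A, p_B : X × R → ({0,1} → [0,1]) with ∑_{a} p_A(x,r)(a) = 1 and ∑_{a} p_B(x,r)(a) = 1 generate the distribution p(a₁,a₂ | x₁,x₂) = ∑_{r} p(r)·p_A(x₁,r)(a₁)·p_B(x₂,r)(a₂) which equals 1/2 if a₁ = a₂ and x₁ = x₂, equals 0 if a₁ ≠ a₂ and x₁ = x₂, and equals 1/4 if x₁ ≠ x₂. Then |R| ≥ |{r : p(r) > 0}| ≥ |X| + 1; that is, shared randomness of cardinality at least |X| + 1 is necessary to generate this distribution exactly. -/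
/-- in the two-party Bell scenario with common input set `X` and binary
outputs, exactly generating the distribution that is `1/2` when `a₁ = a₂, x₁ = x₂`,
`0` when `a₁ ≠ a₂, x₁ = x₂`, and `1/4` when `x₁ ≠ x₂` requires
`|R| ≥ |{r : p(r) > 0}| ≥ |X| + 1`. -/
theorem stmt_8 {X R : Type*} [Fintype X] [Nonempty X] [DecidableEq X] [Fintype R]
    (p : R → ℝ) (hp0 : ∀ r, 0 ≤ p r) (hp1 : ∑ r, p r = 1)
    (pA pB : X → R → Bool → ℝ)
    (hpA0 : ∀ x r a, 0 ≤ pA x r a) (hpA1 : ∀ x r a, pA x r a ≤ 1)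
    (hpB0 : ∀ x r a, 0 ≤ pB x r a) (hpB1 : ∀ x r a, pB x r a ≤ 1)
    (hpAsum : ∀ x r, ∑ a, pA x r a = 1) (hpBsum : ∀ x r, ∑ a, pB x r a = 1)
    (hgen : ∀ (x₁ x₂ : X) (a₁ a₂ : Bool),
      ∑ r, p r * pA x₁ r a₁ * pB x₂ r a₂ =
        if x₁ = x₂ then (if a₁ = a₂ then 1 / 2 else 0) else 1 / 4) :
    Fintype.card R ≥ (Finset.univ.filter fun r : R => 0 < p r).card ∧
      (Finset.univ.filter fun r : R => 0 < p r).card ≥ Fintype.card X + 1 := by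
  classical
  set S : Finset R := Finset.univ.filter fun r : R => 0 < p r with hS
  -- zero off support
  have hpz : ∀ r : R, r ∉ S → p r = 0 := by
    intro r hr
    simp only [hS, Finset.mem_filter, Finset.mem_univ, true_and, not_lt] at hr
    exact le_antisymm hr (hp0 r)
  -- marginals
  have hA : ∀ x₁ x₂ : X, ∑ r, p r * pA x₁ r true = 1 / 2 := by
    intro x₁ x₂
    have h1 := hgen x₁ x₂ true true
    have h2 := hgen x₁ x₂ true false
    have : ∑ r, p r * pA x₁ r true =
        (∑ r, p r * pA x₁ r true * pB x₂ r true) +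
        ∑ r, p r * pA x₁ r true * pB x₂ r false := by
      rw [← Finset.sum_add_distrib]
      refine Finset.sum_congr rfl fun r _ => ?_
      have hs := hpBsum x₂ r
      rw [Fintype.sum_bool] at hs
      linear_combination (-(p r * pA x₁ r true)) * hs
    rw [this, h1, h2]
    by_cases h : x₁ = x₂ <;> simp [h] <;> norm_num
  have hB : ∀ x₁ x₂ : X, ∑ r, p r * pB x₂ r true = 1 / 2 := by
    intro x₁ x₂
    have h1 := hgen x₁ x₂ true true
    have h2 := hgen x₁ x₂ false true
    have : ∑ r, p r * pB x₂ r true =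
        (∑ r, p r * pA x₁ r true * pB x₂ r true) +
        ∑ r, p r * pA x₁ r false * pB x₂ r true := by
      rw [← Finset.sum_add_distrib]
      refine Finset.sum_congr rfl fun r _ => ?_
      have hs := hpAsum x₁ r
      rw [Fintype.sum_bool] at hs
      linear_combination (-(p r * pB x₂ r true)) * hs
    rw [this, h1, h2]
    by_cases h : x₁ = x₂ <;> simp [h] <;> norm_num
  -- the ±1 valued functions
  set gA : R → X → ℝ := fun r x => 2 * pA x r true - 1 with hgA
  set gB : R → X → ℝ := fun r x => 2 * pB x r true - 1 with hgB
  have hcorr : ∀ x₁ x₂ : X, ∑ r, p r * gA r x₁ * gB r x₂ = if x₁ = x₂ then 1 else 0 := by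
    intro x₁ x₂
    have hexp : ∑ r, p r * gA r x₁ * gB r x₂ =
        4 * (∑ r, p r * pA x₁ r true * pB x₂ r true)
          - 2 * (∑ r, p r * pA x₁ r true) - 2 * (∑ r, p r * pB x₂ r true)
          + ∑ r, p r := by
      rw [Finset.mul_sum, Finset.mul_sum, Finset.mul_sum, ← Finset.sum_sub_distrib,
        ← Finset.sum_sub_distrib, ← Finset.sum_add_distrib]
      refine Finset.sum_congr rfl fun r _ => ?_
      simp only [hgA, hgB]; ring
    rw [hexp, hgen x₁ x₂ true true, hA x₁ x₂, hB x₁ x₂, hp1]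
    by_cases h : x₁ = x₂ <;> simp [h] <;> norm_num
  -- on the support, gA = gB and they are ±1
  have hsupp : ∀ r ∈ S, ∀ x : X, gA r x = gB r x ∧ gA r x * gA r x = 1 := by
    intro r hr x
    have hzero : ∑ r, p r * (1 - gA r x * gB r x) = 0 := by
      have hxx := hcorr x x
      rw [if_pos rfl] at hxx
      calc ∑ r, p r * (1 - gA r x * gB r x)
          = (∑ r, p r) - ∑ r, p r * gA r x * gB r x := by
            rw [← Finset.sum_sub_distrib]
            exact Finset.sum_congr rfl fun r _ => by ring
        _ = 0 := by rw [hp1, hxx]; ring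
    have hbnd : ∀ s : R, 0 ≤ p s * (1 - gA s x * gB s x) := by
      intro s
      have h1 := hpA0 x s true; have h2 := hpA1 x s true
      have h3 := hpB0 x s true; have h4 := hpB1 x s true
      have : gA s x * gB s x ≤ 1 := by
        simp only [hgA, hgB]; nlinarith
      exact mul_nonneg (hp0 s) (by linarith)
    have heach := (Finset.sum_eq_zero_iff_of_nonneg (fun s _ => hbnd s)).mp hzero r
      (Finset.mem_univ r)
    have hpr : 0 < p r := by
      simpa only [hS, Finset.mem_filter, Finset.mem_univ, true_and] using hr
    have hab : gA r x * gB r x = 1 := by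
      rcases mul_eq_zero.mp heach with h | h
      · exact absurd h (ne_of_gt hpr)
      · linarith
    have h1 := hpA0 x r true; have h2 := hpA1 x r true
    have h3 := hpB0 x r true; have h4 := hpB1 x r true
    have ha1 : gA r x ≤ 1 := by simp only [hgA]; linarith
    have ha2 : -1 ≤ gA r x := by simp only [hgA]; linarith
    have hb1 : gB r x ≤ 1 := by simp only [hgB]; linarith
    have hb2 : -1 ≤ gB r x := by simp only [hgB]; linarith
    constructor
    · nlinarith [sq_nonneg (gA r x - gB r x)]
    · nlinarith [sq_nonneg (gA r x - gB r x)]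
  -- Gram identity for gA alone
  have hgram : ∀ x₁ x₂ : X, ∑ r, p r * gA r x₁ * gA r x₂ = if x₁ = x₂ then 1 else 0 := by
    intro x₁ x₂
    rw [← hcorr x₁ x₂]
    refine Finset.sum_congr rfl fun r _ => ?_
    by_cases hr : r ∈ S
    · rw [(hsupp r hr x₂).1]
    · rw [hpz r hr]; ring
  have hAmean : ∀ x : X, ∑ r, p r * gA r x = 0 := by
    intro x
    have : ∑ r, p r * gA r x = 2 * (∑ r, p r * pA x r true) - ∑ r, p r := by
      rw [Finset.mul_sum, ← Finset.sum_sub_distrib]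
      exact Finset.sum_congr rfl fun r _ => by simp only [hgA]; ring
    rw [this, hA x x, hp1]; norm_num
  -- orthonormal family indexed by Option X inside functions on the support
  set u : Option X → (↥S → ℝ) := fun i r =>
    Option.rec (Real.sqrt (p r)) (fun x => Real.sqrt (p r) * gA r x) i with hu
  have hsum_ext : ∀ f : R → ℝ, (∀ r, r ∉ S → f r = 0) → ∑ r : ↥S, f r = ∑ r, f r := by
    intro f hf
    calc ∑ r : ↥S, f r = ∑ r ∈ S, f r := Finset.sum_coe_sort S f
      _ = ∑ r, f r := Finset.sum_subset (Finset.subset_univ S) (fun r _ hr => hf r hr)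
  have hinner : ∀ i j : Option X, ∑ r : ↥S, u i r * u j r = if i = j then 1 else 0 := by
    have hsq : ∀ r : R, Real.sqrt (p r) * Real.sqrt (p r) = p r :=
      fun r => Real.mul_self_sqrt (hp0 r)
    intro i j
    match i, j with
    | none, none =>
      have : ∑ r : ↥S, u none r * u none r = ∑ r, p r := by
        rw [← hsum_ext (fun r => p r) (fun r hr => hpz r hr)]
        exact Finset.sum_congr rfl fun r _ => hsq r
      rw [this, hp1]; simp
    | none, some x =>
      have : ∑ r : ↥S, u none r * u (some x) r = ∑ r, p r * gA r x := by
        rw [← hsum_ext (fun r => p r * gA r x) (fun r hr => by simp only [hpz r hr]; ring)]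
        refine Finset.sum_congr rfl fun r _ => ?_
        simp only [hu]; rw [← mul_assoc, hsq r]
      rw [this, hAmean x]; simp
    | some x, none =>
      have : ∑ r : ↥S, u (some x) r * u none r = ∑ r, p r * gA r x := by
        rw [← hsum_ext (fun r => p r * gA r x) (fun r hr => by simp only [hpz r hr]; ring)]
        refine Finset.sum_congr rfl fun r _ => ?_
        simp only [hu]; rw [mul_comm (Real.sqrt (p (r:R)) * gA (r:R) x), ← mul_assoc, hsq r]
      rw [this, hAmean x]; simp
    | some x₁, some x₂ =>
      have : ∑ r : ↥S, u (some x₁) r * u (some x₂) r = ∑ r, p r * gA r x₁ * gA r x₂ := by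
        rw [← hsum_ext (fun r => p r * gA r x₁ * gA r x₂) (fun r hr => by simp only [hpz r hr]; ring)]
        refine Finset.sum_congr rfl fun r _ => ?_
        simp only [hu]
        rw [show Real.sqrt (p ↑r) * gA ↑r x₁ * (Real.sqrt (p ↑r) * gA ↑r x₂)
          = (Real.sqrt (p ↑r) * Real.sqrt (p ↑r)) * gA ↑r x₁ * gA ↑r x₂ by ring, hsq r]
      rw [this, hgram x₁ x₂]
      by_cases h : x₁ = x₂ <;> simp [h]
  have hli : LinearIndependent ℝ u := by
    rw [Fintype.linearIndependent_iff]
    intro c hc j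
    have hcr : ∀ r : ↥S, ∑ i, c i * u i r = 0 := by
      intro r
      have := congrFun hc r
      simpa using this
    calc c j = ∑ i, c i * (if i = j then 1 else 0) := by simp
      _ = ∑ i, c i * ∑ r : ↥S, u i r * u j r :=
          Finset.sum_congr rfl fun i _ => by rw [hinner i j]
      _ = ∑ i, ∑ r : ↥S, c i * u i r * u j r := by
          refine Finset.sum_congr rfl fun i _ => ?_
          rw [Finset.mul_sum]
          exact Finset.sum_congr rfl fun r _ => by ring
      _ = ∑ r : ↥S, ∑ i, c i * u i r * u j r := Finset.sum_comm
      _ = ∑ r : ↥S, (∑ i, c i * u i r) * u j r :=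
          Finset.sum_congr rfl fun r _ => by rw [Finset.sum_mul]
      _ = ∑ r : ↥S, (0:ℝ) * u j r :=
          Finset.sum_congr rfl fun r _ => by rw [hcr r]
      _ = 0 := by simp
  constructor
  · exact le_trans (Finset.card_filter_le _ _) (le_of_eq (Finset.card_univ))
  · have hfin : Fintype.card (Option X) ≤ Module.finrank ℝ (↥S → ℝ) :=
      hli.fintype_card_le_finrank
    rw [Module.finrank_fintype_fun_eq_card, Fintype.card_option, Fintype.card_coe] at hfin
    exact hfin
end

section
/- Let X be a nonempty finite set and let k = ⌈log₂(|X| + 1)⌉, so that |X| ≤ 2^k − 1. Let the shared randomness be a uniformly random bit string b ∈ {0,1}^k (a randomness source of cardinality 2^k), fix an injection x ↦ S_x from X into the nonempty subsets of {1,…,k}, and let both parties, on input x and shared string b, deterministically output ⊕_{i ∈ S_x} b_i (the XOR of the bits indexed by S_x). Then the generated distribution p(a₁,a₂ | x₁,x₂) = (1/2^k)·∑_{b ∈ {0,1}^k} 𝟙[a₁ = ⊕_{i ∈ S_{x₁}} b_i]·𝟙[a₂ = ⊕_{i ∈ S_{x₂}} b_i] equals 1/2 if a₁ = a₂ and x₁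 = x₂, equals 0 if a₁ ≠ a₂ and x₁ = x₂, and equals 1/4 if x₁ ≠ x₂. Hence a shared randomness source of cardinality 2^{⌈log₂(|X|+1)⌉} suffices to generate this distribution exactly. -/
open Finset

section Aux

variable {k : ℕ}

private lemma bit_add_self (b : Fin k → ZMod 2) : b + b = 0 := by
  funext i
  simp only [Pi.add_apply, Pi.zero_apply]
  rw [← two_mul]
  have h2 : (2 : ZMod 2) = 0 := by decide
  rw [h2, zero_mul]

private lemma fiber_translate {M : Type*} [AddCommGroup M] [DecidableEq M]
    (h2 : ∀ m : M, m + m = 0)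
    (φ : (Fin k → ZMod 2) → M) (hadd : ∀ b c, φ (b + c) = φ b + φ c)
    (e : Fin k → ZMod 2) (y : M) :
    (univ.filter (fun b => φ b = y)).card
      = (univ.filter (fun b => φ b = y + φ e)).card := by
  apply Finset.card_nbij' (fun b => b + e) (fun c => c + e)
  · intro b hb
    simp only [Finset.mem_coe, mem_filter, mem_univ, true_and] at hb ⊢
    rw [hadd, hb]
  · intro c hc
    simp only [Finset.mem_coe, mem_filter, mem_univ, true_and] at hc ⊢
    rw [hadd, hc, add_assoc, h2, add_zero]
  · intro b _
    simp only [add_assoc, bit_add_self e, add_zero]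
  · intro c _
    simp only [add_assoc, bit_add_self e, add_zero]

private lemma fiber_card {M : Type*} [AddCommGroup M] [Fintype M] [DecidableEq M]
    (h2 : ∀ m : M, m + m = 0)
    (φ : (Fin k → ZMod 2) → M) (hadd : ∀ b c, φ (b + c) = φ b + φ c)
    (hsurj : Function.Surjective φ) (y : M) :
    Fintype.card M * (univ.filter (fun b => φ b = y)).card = 2 ^ k := by
  have hall : ∀ y' : M, (univ.filter (fun b => φ b = y)).card
      = (univ.filter (fun b => φ b = y')).card := by
    intro y'
    obtain ⟨e, he⟩ := hsurj (y' - y)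
    rw [fiber_translate h2 φ hadd e y, he, add_sub_cancel]
  have htot : ∑ y' : M, (univ.filter (fun b => φ b = y')).card = 2 ^ k := by
    rw [← Finset.card_eq_sum_card_fiberwise (fun b _ => mem_univ (φ b))]
    simp [Fintype.card_fun]
  calc Fintype.card M * (univ.filter (fun b => φ b = y)).card
      = ∑ _y' : M, (univ.filter (fun b => φ b = y)).card := by
        rw [Finset.sum_const, card_univ, smul_eq_mul]
    _ = ∑ y' : M, (univ.filter (fun b => φ b = y')).card := by
        exact Finset.sum_congr rfl fun y' _ => hall y'
    _ = 2 ^ k := htot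

private lemma single_sum (T : Finset (Fin k)) (i : Fin k) (a : ZMod 2) :
    ∑ j ∈ T, (fun j => if j = i then a else 0) j = if i ∈ T then a else 0 := by
  simp [Finset.sum_ite_eq' T i (fun _ => a)]

/-- existence of `e` with prescribed sums `(1,0)` over two distinct nonempty sets -/
private lemma exists_e (S₁ S₂ : Finset (Fin k)) (h1 : S₁.Nonempty) (h2 : S₂.Nonempty)
    (hne : S₁ ≠ S₂) :
    ∃ e : Fin k → ZMod 2, ∑ i ∈ S₁, e i = 1 ∧ ∑ i ∈ S₂, e i = 0 := by
  by_cases hd : (S₁ \ S₂).Nonempty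
  · obtain ⟨i, hi⟩ := hd
    rw [Finset.mem_sdiff] at hi
    refine ⟨fun j => if j = i then 1 else 0, ?_, ?_⟩
    · rw [single_sum S₁ i 1, if_pos hi.1]
    · rw [single_sum S₂ i 1, if_neg hi.2]
  · have hsub : S₁ ⊆ S₂ := by
      rw [← Finset.sdiff_eq_empty_iff_subset]
      exact Finset.not_nonempty_iff_eq_empty.mp hd
    have hd2 : (S₂ \ S₁).Nonempty := by
      rw [Finset.sdiff_nonempty]
      intro hsub2
      exact hne (Finset.Subset.antisymm hsub hsub2)
    obtain ⟨j, hj⟩ := hd2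
    rw [Finset.mem_sdiff] at hj
    obtain ⟨i, hi⟩ := h1
    have hij : i ≠ j := fun h => hj.2 (h ▸ hi)
    refine ⟨fun m => (if m = i then 1 else 0) + (if m = j then 1 else 0), ?_, ?_⟩
    · rw [Finset.sum_add_distrib, single_sum S₁ i 1, single_sum S₁ j 1,
        if_pos hi, if_neg hj.2]
      decide
    · rw [Finset.sum_add_distrib, single_sum S₂ i 1, single_sum S₂ j 1,
        if_pos (hsub hi), if_pos hj.1]
      decide

private lemma zmod2_add_self (m : ZMod 2) : m + m = 0 := by fin_cases m <;> decide

private lemma single_count (T : Finset (Fin k)) (hT : T.Nonempty) (a : ZMod 2) :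
    2 * (univ.filter (fun b : Fin k → ZMod 2 => ∑ i ∈ T, b i = a)).card = 2 ^ k := by
  have := fiber_card (M := ZMod 2) zmod2_add_self (fun b => ∑ i ∈ T, b i)
    (fun b c => by simp [Finset.sum_add_distrib]) ?_ a
  · simpa using this
  · intro v
    obtain ⟨i, hi⟩ := hT
    exact ⟨fun j => if j = i then v else 0,
      by simp [Finset.sum_ite_eq' T i (fun _ => v), hi]⟩

private lemma pair_count (S₁ S₂ : Finset (Fin k)) (h1 : S₁.Nonempty) (h2 : S₂.Nonempty)
    (hne : S₁ ≠ S₂) (a₁ a₂ : ZMod 2) :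
    4 * (univ.filter (fun b : Fin k → ZMod 2 =>
        ∑ i ∈ S₁, b i = a₁ ∧ ∑ i ∈ S₂, b i = a₂)).card = 2 ^ k := by
  obtain ⟨e₁, he₁⟩ := exists_e S₁ S₂ h1 h2 hne
  obtain ⟨e₂, he₂⟩ := exists_e S₂ S₁ h2 h1 hne.symm
  have := fiber_card (M := ZMod 2 × ZMod 2)
    (fun m => by ext <;> exact zmod2_add_self _)
    (fun b => (∑ i ∈ S₁, b i, ∑ i ∈ S₂, b i))
    (fun b c => by simp [Prod.ext_iff, Finset.sum_add_distrib]) ?_ (a₁, a₂)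
  · have hcard : Fintype.card (ZMod 2 × ZMod 2) = 4 := by decide
    rw [hcard] at this
    rw [← this]
    have heq : (univ.filter (fun b : Fin k → ZMod 2 =>
        ∑ i ∈ S₁, b i = a₁ ∧ ∑ i ∈ S₂, b i = a₂))
        = (univ.filter (fun b : Fin k → ZMod 2 =>
          (∑ i ∈ S₁, b i, ∑ i ∈ S₂, b i) = (a₁, a₂))) := by
      apply Finset.filter_congr
      intro b _
      simp [Prod.ext_iff]
    rw [heq]
  · rintro ⟨u, v⟩
    refine ⟨u • e₁ + v • e₂, ?_⟩
    simp only [Prod.mk.injEq, Pi.add_apply, Pi.smul_apply, smul_eq_mul,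
      Finset.sum_add_distrib, ← Finset.mul_sum]
    rw [he₁.1, he₁.2, he₂.1, he₂.2]
    constructor <;> ring

end Aux

/-- with `k = ⌈log₂(|X|+1)⌉` (so `|X| ≤ 2^k − 1`), a uniformly random
bit string `b ∈ {0,1}^k` and the XOR strategy `x ↦ ⊕_{i ∈ S_x} b_i` (for an injection
`x ↦ S_x` into nonempty subsets of `{1,…,k}`) exactly generate the distribution that is
`1/2` when `a₁ = a₂, x₁ = x₂`, `0` when `a₁ ≠ a₂, x₁ = x₂`, and `1/4` when `x₁ ≠ x₂`;
hence a source of cardinality `2^⌈log₂(|X|+1)⌉` suffices. -/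
theorem stmt_9 {X : Type*} [Fintype X] [Nonempty X] [DecidableEq X]
    (k : ℕ) (hk : k = Nat.clog 2 (Fintype.card X + 1))
    (S : X → Finset (Fin k)) (hSinj : Function.Injective S)
    (hSne : ∀ x, (S x).Nonempty) :
    Fintype.card X ≤ 2 ^ k - 1 ∧
    ∀ (x₁ x₂ : X) (a₁ a₂ : ZMod 2),
      (1 / (2 ^ k : ℝ)) * ∑ b : Fin k → ZMod 2,
          (if a₁ = ∑ i ∈ S x₁, b i then (1 : ℝ) else 0) *
          (if a₂ = ∑ i ∈ S x₂, b i then (1 : ℝ) else 0) =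
        if x₁ = x₂ then (if a₁ = a₂ then 1 / 2 else 0) else 1 / 4 := by
  have hpow : (0:ℝ) < (2:ℝ) ^ k := by positivity
  constructor
  · calc Fintype.card X = (univ.image S).card := by
          rw [Finset.card_image_of_injective univ hSinj, card_univ]
      _ ≤ ((univ : Finset (Finset (Fin k))).erase ∅).card := by
          apply Finset.card_le_card
          intro T hT
          simp only [Finset.mem_image, mem_univ, true_and] at hT
          obtain ⟨x, rfl⟩ := hT
          exact Finset.mem_erase.mpr ⟨(hSne x).ne_empty, mem_univ _⟩
      _ = 2 ^ k - 1 := by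
          rw [Finset.card_erase_of_mem (mem_univ _), card_univ, Fintype.card_finset,
            Fintype.card_fin]
  · intro x₁ x₂ a₁ a₂
    by_cases hx : x₁ = x₂
    · subst hx
      rw [if_pos rfl]
      by_cases ha : a₁ = a₂
      · subst ha
        rw [if_pos rfl]
        have hsum : ∑ b : Fin k → ZMod 2,
            (if a₁ = ∑ i ∈ S x₁, b i then (1:ℝ) else 0) *
            (if a₁ = ∑ i ∈ S x₁, b i then (1:ℝ) else 0)
            = ((univ.filter (fun b : Fin k → ZMod 2 => ∑ i ∈ S x₁, b i = a₁)).card : ℝ) := by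
          rw [← Finset.sum_boole]
          apply Finset.sum_congr rfl
          intro b _
          by_cases h : a₁ = ∑ i ∈ S x₁, b i
          · rw [if_pos h, if_pos h.symm, mul_one]
          · rw [if_neg h, if_neg (fun h' => h h'.symm), mul_zero]
        rw [hsum]
        have hc := single_count (S x₁) (hSne x₁) a₁
        have hcR : (2:ℝ) * ((univ.filter
            (fun b : Fin k → ZMod 2 => ∑ i ∈ S x₁, b i = a₁)).card : ℝ) = 2 ^ k := by
          exact_mod_cast congrArg (Nat.cast : ℕ → ℝ) hc
        field_simp
        linarith
      · rw [if_neg ha]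
        rw [Finset.sum_eq_zero, mul_zero]
        intro b _
        rcases eq_or_ne a₁ (∑ i ∈ S x₁, b i) with h | h
        · have h2 : a₂ ≠ ∑ i ∈ S x₁, b i := fun h' => ha (h.trans h'.symm)
          simp [h2]
        · simp [h]
    · rw [if_neg hx]
      have hSne' : S x₁ ≠ S x₂ := fun h => hx (hSinj h)
      have hsum : ∑ b : Fin k → ZMod 2,
          (if a₁ = ∑ i ∈ S x₁, b i then (1:ℝ) else 0) *
          (if a₂ = ∑ i ∈ S x₂, b i then (1:ℝ) else 0)
          = ((univ.filter (fun b : Fin k → ZMod 2 =>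
              ∑ i ∈ S x₁, b i = a₁ ∧ ∑ i ∈ S x₂, b i = a₂)).card : ℝ) := by
        rw [← Finset.sum_boole]
        apply Finset.sum_congr rfl
        intro b _
        by_cases h1 : a₁ = ∑ i ∈ S x₁, b i <;> by_cases h2 : a₂ = ∑ i ∈ S x₂, b i <;>
          simp [h1, h2, eq_comm]
      rw [hsum]
      have hc := pair_count (S x₁) (S x₂) (hSne x₁) (hSne x₂) hSne' a₁ a₂
      have hcR : (4:ℝ) * ((univ.filter (fun b : Fin k → ZMod 2 =>
          ∑ i ∈ S x₁, b i = a₁ ∧ ∑ i ∈ S x₂, b i = a₂)).card : ℝ) = 2 ^ k := by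
        exact_mod_cast congrArg (Nat.cast : ℕ → ℝ) hc
      field_simp
      linarith
end

section
/- Let m ≥ 1 and let p₁,…,p_m be positive reals with ∑_{i=1}^m pᵢ = 1, and define the inner product ⟨x,y⟩_p = ∑_{i=1}^m pᵢ·xᵢ·yᵢ on ℝ^m. Let n ≥ 1 and let u₁,…,u_n ∈ {0,1}^m be vectors satisfying ⟨u_x, u_y⟩_p = 1/2 if x = y and ⟨u_x, u_y⟩_p = 1/4 if x ≠ y, and ⟨u_x, 𝟏⟩_p = 1/2 for all x, where 𝟏 is the all-ones vector. Then m ≥ n + 1. -/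
/-- for positive weights `p` summing to 1 and binary vectors `u_x` with
`⟨u_x,u_y⟩_p = 1/2` if `x = y`, `1/4` if `x ≠ y`, and `⟨u_x,𝟏⟩_p = 1/2`, one must have
`m ≥ n + 1`. -/
theorem stmt_12 (m : ℕ) (hm : 1 ≤ m)
    (p : Fin m → ℝ) (hp : ∀ i, 0 < p i) (hp1 : ∑ i, p i = 1)
    (n : ℕ) (hn : 1 ≤ n)
    (u : Fin n → Fin m → ℝ) (hu : ∀ x i, u x i = 0 ∨ u x i = 1)
    (huu : ∀ x y, ∑ i, p i * u x i * u y i = if x = y then 1 / 2 else 1 / 4)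
    (hu1 : ∀ x, ∑ i, p i * u x i * 1 = 1 / 2) :
    m ≥ n + 1 := by
  classical
  have hsq : ∀ i, Real.sqrt (p i) * Real.sqrt (p i) = p i := fun i =>
    Real.mul_self_sqrt (hp i).le
  -- key orthogonality of the centered vectors
  have key : ∀ x y : Fin n, ∑ i, p i * ((u x i - 1/2) * (u y i - 1/2))
      = if x = y then (1:ℝ)/4 else 0 := by
    intro x y
    have expand : ∀ i ∈ Finset.univ, p i * ((u x i - 1/2) * (u y i - 1/2))
        = p i * u x i * u y i - (1/2) * (p i * u x i * 1)
          - (1/2) * (p i * u y i * 1) + (1/4) * p i := by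
      intro i _; ring
    rw [Finset.sum_congr rfl expand]
    rw [Finset.sum_add_distrib, Finset.sum_sub_distrib, Finset.sum_sub_distrib,
      ← Finset.mul_sum, ← Finset.mul_sum, ← Finset.mul_sum, huu x y, hu1 x, hu1 y, hp1]
    by_cases h : x = y <;> simp [h] <;> norm_num
  have hcent : ∀ x : Fin n, ∑ i, p i * (u x i - 1/2) = 0 := by
    intro x
    have expand : ∀ i ∈ Finset.univ, p i * (u x i - 1/2)
        = p i * u x i * 1 - (1/2) * p i := by intro i _; ring
    rw [Finset.sum_congr rfl expand, Finset.sum_sub_distrib, ← Finset.mul_sum,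
      hu1 x, hp1]
    norm_num
  -- the orthonormal family
  set f : Fin (n+1) → EuclideanSpace ℝ (Fin m) :=
    fun k => WithLp.toLp 2 (Fin.cases (fun i => Real.sqrt (p i))
      (fun x i => 2 * Real.sqrt (p i) * (u x i - 1/2)) k : Fin m → ℝ) with hf
  have hortho : Orthonormal ℝ f := by
    rw [orthonormal_iff_ite]
    intro k l
    induction k using Fin.cases with
    | zero =>
      induction l using Fin.cases with
      | zero =>
        simp only [hf, PiLp.inner_apply, RCLike.inner_apply, conj_trivial, WithLp.ofLp_toLp, Fin.cases_zero]
        simp [hsq, hp1]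
      | succ y =>
        simp only [hf, PiLp.inner_apply, RCLike.inner_apply, conj_trivial, WithLp.ofLp_toLp,
          Fin.cases_zero, Fin.cases_succ]
        have : ∀ i ∈ Finset.univ, Real.sqrt (p i) * (2 * Real.sqrt (p i) * (u y i - 1/2))
            = 2 * (p i * (u y i - 1/2)) := by
          intro i _
          linear_combination (2 * (u y i - 1/2)) * hsq i
        rw [Finset.sum_congr rfl (fun i hi => (mul_comm _ _).trans (this i hi)), ← Finset.mul_sum, hcent y]
        simp [Fin.succ_ne_zero y, eq_comm]
    | succ x =>
      induction l using Fin.cases with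
      | zero =>
        simp only [hf, PiLp.inner_apply, RCLike.inner_apply, conj_trivial, WithLp.ofLp_toLp,
          Fin.cases_zero, Fin.cases_succ]
        have : ∀ i ∈ Finset.univ, 2 * Real.sqrt (p i) * (u x i - 1/2) * Real.sqrt (p i)
            = 2 * (p i * (u x i - 1/2)) := by
          intro i _
          linear_combination (2 * (u x i - 1/2)) * hsq i
        rw [Finset.sum_congr rfl (fun i hi => (mul_comm _ _).trans (this i hi)), ← Finset.mul_sum, hcent x]
        simp [(Fin.succ_ne_zero x)]
      | succ y =>
        simp only [hf, PiLp.inner_apply, RCLike.inner_apply, conj_trivial, WithLp.ofLp_toLp, Fin.cases_succ]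
        have : ∀ i ∈ Finset.univ,
            2 * Real.sqrt (p i) * (u x i - 1/2) * (2 * Real.sqrt (p i) * (u y i - 1/2))
            = 4 * (p i * ((u x i - 1/2) * (u y i - 1/2))) := by
          intro i _
          linear_combination (4 * ((u x i - 1/2) * (u y i - 1/2))) * hsq i
        rw [Finset.sum_congr rfl (fun i hi => (mul_comm _ _).trans (this i hi)), ← Finset.mul_sum, key x y]
        by_cases h : x = y
        · simp [h]
        · simp [h, Fin.succ_inj.not.mpr h]
  have hli := hortho.linearIndependent
  have hcard := hli.fintype_card_le_finrank
  simpa [finrank_euclideanSpace_fin] using hcard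
end
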